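/- arXiv:2412.18427 — 6 statements merged into one kernel-verified Lean document; each statement's English description precedes it below -/
import Mathlib

section
/- For every bounded interval I ⊂ [0,∞) there exists a constant C > 0 such that every positive solution u of (P_λ) with λ ∈ I and u(x) < r on [0,1] satisfies |u(x)| ≤ C, |u'(x)| ≤ C, |u''(x)| ≤ C and |u'''(x)| ≤ C for all x ∈ [0,1]. -/
set_option linter.unusedVariables false
set_option linter.unreachableTactic false
set_option linter.unusedTactic false


open Set Filter MeasureTheory intervalIntegral

/-- `u` is a positive solution of the clamped problem `u'''' = lam * f (u)` on `(0,1)`,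
`u(0) = u(1) = u'(0) = u'(1) = 0`, with values in `[0, r)` (the domain of `f`). -/
def IsPosSol (f : ℝ → ℝ) (r lam : ℝ) (u : ℝ → ℝ) : Prop :=
  ContDiffOn ℝ 4 u (Set.Icc 0 1) ∧
  (∀ x ∈ Set.Icc (0:ℝ) 1, u x < r) ∧
  (∀ x ∈ Set.Ioo (0:ℝ) 1, iteratedDerivWithin 4 u (Set.Icc 0 1) x = lam * f (u x)) ∧
  u 0 = 0 ∧ u 1 = 0 ∧
  derivWithin u (Set.Icc 0 1) 0 = 0 ∧ derivWithin u (Set.Icc 0 1) 1 = 0 ∧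
  (∀ x ∈ Set.Ioo (0:ℝ) 1, 0 ≤ u x) ∧
  (∃ x ∈ Set.Ioo (0:ℝ) 1, u x ≠ 0)

private lemma le_on_Icc01 {g h : ℝ → ℝ} (hg : ContinuousOn g (Icc 0 1))
    (hh : ContinuousOn h (Icc 0 1)) (hle : ∀ x ∈ Ioo (0:ℝ) 1, g x ≤ h x) :
    ∀ x ∈ Icc (0:ℝ) 1, g x ≤ h x := by
  have hcl : closure (Ioo (0:ℝ) 1) = Icc 0 1 := closure_Ioo (by norm_num)
  intro x hx
  exact le_on_closure hle (by rwa [hcl]) (by rwa [hcl]) (by rw [hcl]; exact hx)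

private lemma eq_on_Icc01 {g h : ℝ → ℝ} (hg : ContinuousOn g (Icc 0 1))
    (hh : ContinuousOn h (Icc 0 1)) (hle : ∀ x ∈ Ioo (0:ℝ) 1, g x = h x) :
    ∀ x ∈ Icc (0:ℝ) 1, g x = h x := fun x hx =>
  le_antisymm (le_on_Icc01 hg hh (fun y hy => (hle y hy).le) x hx)
    (le_on_Icc01 hh hg (fun y hy => (hle y hy).ge) x hx)

private lemma ftc_sub {G g : ℝ → ℝ} (hG : ContinuousOn G (Icc 0 1))
    (hd : ∀ x ∈ Ioo (0:ℝ) 1, HasDerivAt G (g x) x)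
    (hg : ContinuousOn g (Icc 0 1)) {a b : ℝ} (ha : a ∈ Icc (0:ℝ) 1) (hb : b ∈ Icc (0:ℝ) 1) :
    ∫ x in a..b, g x = G b - G a := by
  have main : ∀ {a b : ℝ}, a ∈ Icc (0:ℝ) 1 → b ∈ Icc (0:ℝ) 1 → a ≤ b →
      ∫ x in a..b, g x = G b - G a := by
    intro a b ha hb hab
    have hsub : Icc a b ⊆ Icc (0:ℝ) 1 := Icc_subset_Icc ha.1 hb.2
    refine integral_eq_sub_of_hasDeriv_right_of_le hab (hG.mono hsub)
      (fun x hx => (hd x ⟨lt_of_le_of_lt ha.1 hx.1, lt_of_lt_of_le hx.2 hb.2⟩).hasDerivWithinAt) ?_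
    exact (hg.mono (by rw [uIcc_of_le hab]; exact hsub)).intervalIntegrable
  rcases le_total a b with h | h
  · exact main ha hb h
  · rw [integral_symm, main hb ha h]; ring

set_option maxHeartbeats 4000000 in
private lemma aprioriKey
    (f : ℝ → ℝ) (r : ℝ) (hr : 0 < r)
    (hf : ContDiffOn ℝ 1 f (Set.Ico 0 r))
    (hfpos : ∀ s ∈ Set.Ico (0:ℝ) r, 0 < f s)
    (hf' : ∀ s ∈ Set.Ioo (0:ℝ) r, 0 < derivWithin f (Set.Ico 0 r) s)
    (lam : ℝ) (u : ℝ → ℝ) (hu : IsPosSol f r lam u) (hlam0 : 0 ≤ lam)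
    (L : ℝ) (hlamL : lam ≤ L) (hL0 : 0 ≤ L) :
    ∀ k : ℕ, k ≤ 3 → ∀ x ∈ Set.Icc (0:ℝ) 1,
      |iteratedDerivWithin k u (Set.Icc 0 1) x| ≤
        r + (L * f (r/2) + 4*(1600*r + Real.sqrt (10*(L * f (r/2) * r)) + 1) *
          Real.sqrt (1600*r + Real.sqrt (10*(L * f (r/2) * r)) + 1) / Real.sqrt r) + 1 := by
  obtain ⟨hu4, hur, hode, hu0, hu1, hder0, hder1, hupos, hune⟩ := hu
  have hUD : UniqueDiffOn ℝ (Icc (0:ℝ) 1) := uniqueDiffOn_Icc one_pos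
  have h0mem : (0:ℝ) ∈ Icc (0:ℝ) 1 := by norm_num
  have h1mem : (1:ℝ) ∈ Icc (0:ℝ) 1 := by norm_num
  set v1 : ℝ → ℝ := iteratedDerivWithin 1 u (Icc 0 1) with hv1def
  set v2 : ℝ → ℝ := iteratedDerivWithin 2 u (Icc 0 1) with hv2def
  set v3 : ℝ → ℝ := iteratedDerivWithin 3 u (Icc 0 1) with hv3def
  set v4 : ℝ → ℝ := iteratedDerivWithin 4 u (Icc 0 1) with hv4def
  have hD : ∀ k : ℕ, k < 4 → ∀ x ∈ Icc (0:ℝ) 1, HasDerivWithinAt (iteratedDerivWithin k u (Icc 0 1))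
      (iteratedDerivWithin (k+1) u (Icc 0 1) x) (Icc 0 1) x := by
    intro k hk x hx
    have hdiff := hu4.differentiableOn_iteratedDerivWithin (m := k) (by exact_mod_cast hk) hUD
    have h := (hdiff x hx).hasDerivWithinAt
    rw [iteratedDerivWithin_succ]
    exact h
  have hDa : ∀ k : ℕ, k < 4 → ∀ x ∈ Ioo (0:ℝ) 1, HasDerivAt (iteratedDerivWithin k u (Icc 0 1))
      (iteratedDerivWithin (k+1) u (Icc 0 1) x) x := fun k hk x hx =>
    (hD k hk x (Ioo_subset_Icc_self hx)).hasDerivAt (Icc_mem_nhds hx.1 hx.2)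
  have hCk : ∀ k : ℕ, k ≤ 4 → ContinuousOn (iteratedDerivWithin k u (Icc 0 1)) (Icc (0:ℝ) 1) :=
    fun k hk => hu4.continuousOn_iteratedDerivWithin (by exact_mod_cast hk) hUD
  -- specialized versions
  have hzero : iteratedDerivWithin 0 u (Icc (0:ℝ) 1) = u := iteratedDerivWithin_zero
  have hDu : ∀ x ∈ Ioo (0:ℝ) 1, HasDerivAt u (v1 x) x := by
    intro x hx; have := hDa 0 (by norm_num) x hx; rwa [hzero] at this
  have hD1 : ∀ x ∈ Ioo (0:ℝ) 1, HasDerivAt v1 (v2 x) x := fun x hx => hDa 1 (by norm_num) x hx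
  have hD2 : ∀ x ∈ Ioo (0:ℝ) 1, HasDerivAt v2 (v3 x) x := fun x hx => hDa 2 (by norm_num) x hx
  have hD3 : ∀ x ∈ Ioo (0:ℝ) 1, HasDerivAt v3 (v4 x) x := fun x hx => hDa 3 (by norm_num) x hx
  have hcu : ContinuousOn u (Icc (0:ℝ) 1) := by have := hCk 0 (by norm_num); rwa [hzero] at this
  have hc1 : ContinuousOn v1 (Icc (0:ℝ) 1) := hCk 1 (by norm_num)
  have hc2 : ContinuousOn v2 (Icc (0:ℝ) 1) := hCk 2 (by norm_num)
  have hc3 : ContinuousOn v3 (Icc (0:ℝ) 1) := hCk 3 (by norm_num)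
  have hc4 : ContinuousOn v4 (Icc (0:ℝ) 1) := hCk 4 (by norm_num)
  have hv10 : v1 0 = 0 := by rw [hv1def, iteratedDerivWithin_one]; exact hder0
  have hv11 : v1 1 = 0 := by rw [hv1def, iteratedDerivWithin_one]; exact hder1
  have hun : ∀ x ∈ Icc (0:ℝ) 1, 0 ≤ u x := by
    intro x hx
    rcases eq_or_lt_of_le hx.1 with h0 | h0
    · rw [← h0, hu0]
    rcases eq_or_lt_of_le hx.2 with h1 | h1
    · rw [h1, hu1]
    · exact hupos x ⟨h0, h1⟩
  have humem : ∀ x ∈ Icc (0:ℝ) 1, u x ∈ Ico 0 r := fun x hx => ⟨hun x hx, hur x hx⟩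
  have hv4n : ∀ x ∈ Icc (0:ℝ) 1, 0 ≤ v4 x := by
    have : ∀ x ∈ Ioo (0:ℝ) 1, (fun _ => (0:ℝ)) x ≤ v4 x := by
      intro x hx
      rw [hode x hx]
      exact mul_nonneg hlam0 (hfpos _ (humem x (Ioo_subset_Icc_self hx))).le
    exact le_on_Icc01 continuousOn_const hc4 this
  -- continuity of auxiliary integrands
  have hfc : ContinuousOn f (Ico 0 r) := hf.continuousOn
  have hfu : ContinuousOn (fun x => f (u x)) (Icc (0:ℝ) 1) := hfc.comp hcu humem
  -- integrability helper
  have hint : ∀ {g : ℝ → ℝ}, ContinuousOn g (Icc (0:ℝ) 1) → IntervalIntegrable g volume 0 1 := by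
    intro g hg
    exact (hg.mono (by rw [uIcc_of_le (by norm_num : (0:ℝ) ≤ 1)])).intervalIntegrable
  -- Identity E1 : ∫ v2 = 0
  have E1 : ∫ x in (0:ℝ)..1, v2 x = 0 := by
    rw [ftc_sub hc1 hD1 hc2 h0mem h1mem, hv10, hv11]; ring
  -- Identity Id1 : ∫ v4 x * (x*(1-x)) = v2 0 + v2 1
  have hcId1 : ContinuousOn (fun x => v4 x * (x*(1-x))) (Icc (0:ℝ) 1) :=
    hc4.mul ((continuous_id.mul (continuous_const.sub continuous_id)).continuousOn)
  have Id1 : ∫ x in (0:ℝ)..1, v4 x * (x*(1-x)) = v2 0 + v2 1 := by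
    have hGc : ContinuousOn (fun x => v3 x * (x*(1-x)) - v2 x * (1-2*x) - 2 * v1 x) (Icc (0:ℝ) 1) := by
      refine ContinuousOn.sub (ContinuousOn.sub (hc3.mul ?_) (hc2.mul ?_)) (continuousOn_const.mul hc1)
      · exact (continuous_id.mul (continuous_const.sub continuous_id)).continuousOn
      · exact (continuous_const.sub (continuous_const.mul continuous_id)).continuousOn
    have hGd : ∀ x ∈ Ioo (0:ℝ) 1, HasDerivAt (fun x => v3 x * (x*(1-x)) - v2 x * (1-2*x) - 2 * v1 x)
        (v4 x * (x*(1-x))) x := by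
      intro x hx
      have hp1 : HasDerivAt (fun y : ℝ => y*(1-y)) (1-2*x) x := by
        have := (hasDerivAt_id x).mul ((hasDerivAt_const x (1:ℝ)).sub (hasDerivAt_id x))
        refine this.congr_deriv ?_; first | ring1 | (simp only [id_eq, Pi.sub_apply]; ring1) | (push_cast; ring1) | (simp only [id_eq]; push_cast; ring1)
      have hp2 : HasDerivAt (fun y : ℝ => 1-2*y) (-2 : ℝ) x := by
        have := (hasDerivAt_const x (1:ℝ)).sub ((hasDerivAt_const x (2:ℝ)).mul (hasDerivAt_id x))
        refine this.congr_deriv ?_; first | ring1 | (simp only [id_eq]; ring1) | (push_cast; ring1) | (simp only [id_eq]; push_cast; ring1)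
      have := (((hD3 x hx).mul hp1).sub ((hD2 x hx).mul hp2)).sub ((hD1 x hx).const_mul 2)
      refine this.congr_deriv ?_; first | ring1 | (simp only [id_eq]; ring1) | (push_cast; ring1) | (simp only [id_eq]; push_cast; ring1)
    have := ftc_sub hGc hGd hcId1 h0mem h1mem
    rw [this, hv10, hv11]; ring
  -- Id2 : ∫ (v4 u - v2²) = 0
  have hcId2 : ContinuousOn (fun x => v4 x * u x - v2 x ^ 2) (Icc (0:ℝ) 1) :=
    (hc4.mul hcu).sub (hc2.pow 2)
  have Id2 : ∫ x in (0:ℝ)..1, (v4 x * u x - v2 x ^ 2) = 0 := by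
    have hGc : ContinuousOn (fun x => v3 x * u x - v2 x * v1 x) (Icc (0:ℝ) 1) :=
      (hc3.mul hcu).sub (hc2.mul hc1)
    have hGd : ∀ x ∈ Ioo (0:ℝ) 1, HasDerivAt (fun x => v3 x * u x - v2 x * v1 x)
        (v4 x * u x - v2 x ^ 2) x := by
      intro x hx
      have := ((hD3 x hx).mul (hDu x hx)).sub ((hD2 x hx).mul (hD1 x hx))
      refine this.congr_deriv ?_; first | ring1 | (simp only [id_eq]; ring1) | (push_cast; ring1) | (simp only [id_eq]; push_cast; ring1)
    have := ftc_sub hGc hGd hcId2 h0mem h1mem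
    rw [this, hu0, hu1, hv10, hv11]; ring
  -- Id3 : ∫ (v4 x (x v1) - (3/2) v2²) = -(v2 1)²/2
  have hcId3 : ContinuousOn (fun x => v4 x * (x * v1 x) - 3/2 * v2 x ^ 2) (Icc (0:ℝ) 1) :=
    (hc4.mul (continuousOn_id.mul hc1)).sub (continuousOn_const.mul (hc2.pow 2))
  have Id3 : ∫ x in (0:ℝ)..1, (v4 x * (x * v1 x) - 3/2 * v2 x ^ 2) = -(v2 1 ^ 2)/2 := by
    have hGc : ContinuousOn (fun x => v3 x * (x * v1 x) - v2 x * v1 x - x * v2 x ^ 2 / 2)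
        (Icc (0:ℝ) 1) :=
      ((hc3.mul (continuousOn_id.mul hc1)).sub (hc2.mul hc1)).sub
        ((continuousOn_id.mul (hc2.pow 2)).div_const 2)
    have hGd : ∀ x ∈ Ioo (0:ℝ) 1, HasDerivAt
        (fun x => v3 x * (x * v1 x) - v2 x * v1 x - x * v2 x ^ 2 / 2)
        (v4 x * (x * v1 x) - 3/2 * v2 x ^ 2) x := by
      intro x hx
      have hxv1 : HasDerivAt (fun y => y * v1 y) (1 * v1 x + x * v2 x) x :=
        (hasDerivAt_id x).mul (hD1 x hx)
      have hsq : HasDerivAt (fun y => v2 y ^ 2) (2 * v2 x * v3 x) x := by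
        have := (hD2 x hx).pow 2
        refine this.congr_deriv ?_; first | ring1 | (simp only [id_eq]; ring1) | (push_cast; ring1) | (simp only [id_eq]; push_cast; ring1)
      have := (((hD3 x hx).mul hxv1).sub ((hD2 x hx).mul (hD1 x hx))).sub
        (((hasDerivAt_id x).mul hsq).div_const 2)
      refine this.congr_deriv ?_; first | ring1 | (simp only [id_eq]; ring1) | (push_cast; ring1) | (simp only [id_eq]; push_cast; ring1)
    have := ftc_sub hGc hGd hcId3 h0mem h1mem
    rw [this, hv10, hv11]; ring
  -- Id3' : ∫ (v4 x ((x-1) v1) - (3/2) v2²) = -(v2 0)²/2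
  have hcId3' : ContinuousOn (fun x => v4 x * ((x-1) * v1 x) - 3/2 * v2 x ^ 2) (Icc (0:ℝ) 1) :=
    (hc4.mul ((continuousOn_id.sub continuousOn_const).mul hc1)).sub
      (continuousOn_const.mul (hc2.pow 2))
  have Id3' : ∫ x in (0:ℝ)..1, (v4 x * ((x-1) * v1 x) - 3/2 * v2 x ^ 2) = -(v2 0 ^ 2)/2 := by
    have hGc : ContinuousOn (fun x => v3 x * ((x-1) * v1 x) - v2 x * v1 x - (x-1) * v2 x ^ 2 / 2)
        (Icc (0:ℝ) 1) :=
      ((hc3.mul ((continuousOn_id.sub continuousOn_const).mul hc1)).sub (hc2.mul hc1)).sub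
        (((continuousOn_id.sub continuousOn_const).mul (hc2.pow 2)).div_const 2)
    have hGd : ∀ x ∈ Ioo (0:ℝ) 1, HasDerivAt
        (fun x => v3 x * ((x-1) * v1 x) - v2 x * v1 x - (x-1) * v2 x ^ 2 / 2)
        (v4 x * ((x-1) * v1 x) - 3/2 * v2 x ^ 2) x := by
      intro x hx
      have hxm : HasDerivAt (fun y : ℝ => y - 1) (1:ℝ) x := by
        simpa using (hasDerivAt_id x).sub_const (1:ℝ)
      have hxv1 : HasDerivAt (fun y => (y-1) * v1 y) (1 * v1 x + (x-1) * v2 x) x :=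
        hxm.mul (hD1 x hx)
      have hsq : HasDerivAt (fun y => v2 y ^ 2) (2 * v2 x * v3 x) x := by
        have := (hD2 x hx).pow 2
        refine this.congr_deriv ?_; first | ring1 | (simp only [id_eq]; ring1) | (push_cast; ring1) | (simp only [id_eq]; push_cast; ring1)
      have := (((hD3 x hx).mul hxv1).sub ((hD2 x hx).mul (hD1 x hx))).sub
        ((hxm.mul hsq).div_const 2)
      refine this.congr_deriv ?_; first | ring1 | (simp only [id_eq]; ring1) | (push_cast; ring1) | (simp only [id_eq]; push_cast; ring1)
    have := ftc_sub hGc hGd hcId3' h0mem h1mem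
    rw [this, hv10, hv11]; ring
  -- max of u
  obtain ⟨p, hpmem, hpmax⟩ := isCompact_Icc.exists_isMaxOn (⟨0, h0mem⟩ : (Icc (0:ℝ) 1).Nonempty) hcu
  have hm0 : 0 ≤ u p := hun p hpmem
  have hmr : u p < r := hur p hpmem
  have hum : ∀ x ∈ Icc (0:ℝ) 1, u x ≤ u p := fun x hx => hpmax hx
  -- monotonicity of f
  have hfdiff : DifferentiableOn ℝ f (Ico 0 r) := hf.differentiableOn one_ne_zero
  have hfmono : MonotoneOn f (Ico 0 r) := by
    apply monotoneOn_of_deriv_nonneg (convex_Ico 0 r) hfc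
    · rw [interior_Ico]
      exact fun x hx => ((hfdiff x (Ioo_subset_Ico_self hx)).differentiableAt
        (Ico_mem_nhds hx.1 hx.2)).differentiableWithinAt
    · rw [interior_Ico]
      intro x hx
      have heq : derivWithin f (Ico 0 r) x = deriv f x :=
        derivWithin_of_mem_nhds (Ico_mem_nhds hx.1 hx.2)
      rw [← heq]
      exact (hf' x hx).le
  -- clamped extension of f and its primitive
  set cl : ℝ → ℝ := fun τ => min (max τ 0) (u p) with hcldef
  have hclmem : ∀ τ, cl τ ∈ Ico (0:ℝ) r := by
    intro τ
    constructor
    · exact le_min (le_max_right τ 0) hm0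
    · exact lt_of_le_of_lt (min_le_right _ _) hmr
  have hcleq : ∀ t, 0 ≤ t → t ≤ u p → cl t = t := by
    intro t h0 h1
    rw [hcldef]; simp [max_eq_left h0, min_eq_left h1]
  have hclcont : Continuous cl := (continuous_id.max continuous_const).min continuous_const
  set fe : ℝ → ℝ := fun τ => f (cl τ) with hfedef
  have hfecont : Continuous fe := hfc.comp_continuous hclcont hclmem
  have hfeeq : ∀ t, 0 ≤ t → t ≤ u p → fe t = f t := fun t h0 h1 => by
    rw [hfedef]; simp only [hcleq t h0 h1]
  set FF : ℝ → ℝ := fun t => ∫ τ in (0:ℝ)..t, fe τ with hFFdef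
  have hFF0 : FF 0 = 0 := intervalIntegral.integral_same
  have hFFd : ∀ t, HasDerivAt FF (fe t) t := by
    intro t
    exact intervalIntegral.integral_hasDerivAt_right (hfecont.intervalIntegrable _ _)
      hfecont.stronglyMeasurable.stronglyMeasurableAtFilter hfecont.continuousAt
  have hFFcont : Continuous FF := by
    rw [continuous_iff_continuousAt]; exact fun t => (hFFd t).continuousAt
  have hFFucont : ContinuousOn (fun x => FF (u x)) (Icc (0:ℝ) 1) :=
    (hFFcont.continuousOn).comp hcu (mapsTo_univ _ _ |>.mono_right (subset_univ _))
  have hFFnn : ∀ t ∈ Ico (0:ℝ) r, 0 ≤ FF t := by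
    intro t ht
    apply intervalIntegral.integral_nonneg ht.1
    intro τ _; exact (hfpos _ (hclmem τ)).le
  have hFFle : ∀ t, 0 ≤ t → t ≤ u p → FF t ≤ t * f t := by
    intro t h0 h1
    have h2 : ∫ τ in (0:ℝ)..t, fe τ ≤ ∫ τ in (0:ℝ)..t, f t := by
      apply intervalIntegral.integral_mono_on h0 (hfecont.intervalIntegrable _ _)
        intervalIntegrable_const
      intro τ hτ
      have hτm : τ ≤ u p := le_trans hτ.2 h1
      rw [hfeeq τ hτ.1 hτm]
      exact hfmono ⟨hτ.1, lt_of_le_of_lt hτm hmr⟩ ⟨h0, lt_of_le_of_lt h1 hmr⟩ hτ.2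
    calc FF t ≤ ∫ τ in (0:ℝ)..t, f t := h2
    _ = t * f t := by rw [intervalIntegral.integral_const, smul_eq_mul, sub_zero]
  have hFFud : ∀ x ∈ Ioo (0:ℝ) 1, HasDerivAt (fun y => FF (u y)) (f (u x) * v1 x) x := by
    intro x hx
    have hxI : x ∈ Icc (0:ℝ) 1 := Ioo_subset_Icc_self hx
    have h := (hFFd (u x)).comp x (hDu x hx)
    rw [hfeeq (u x) (hun x hxI) (hum x hxI)] at h
    exact h
  -- Id4 and Id4'
  have hcId4 : ContinuousOn (fun x => FF (u x) + x * (f (u x) * v1 x)) (Icc (0:ℝ) 1) :=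
    hFFucont.add (continuousOn_id.mul (hfu.mul hc1))
  have Id4 : ∫ x in (0:ℝ)..1, (FF (u x) + x * (f (u x) * v1 x)) = 0 := by
    have hGc : ContinuousOn (fun x => x * FF (u x)) (Icc (0:ℝ) 1) := continuousOn_id.mul hFFucont
    have hGd : ∀ x ∈ Ioo (0:ℝ) 1, HasDerivAt (fun x => x * FF (u x))
        (FF (u x) + x * (f (u x) * v1 x)) x := by
      intro x hx
      have := (hasDerivAt_id x).mul (hFFud x hx)
      refine this.congr_deriv ?_; first | ring1 | (simp only [id_eq]; ring1) | (push_cast; ring1) | (simp only [id_eq]; push_cast; ring1)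
    have := ftc_sub hGc hGd hcId4 h0mem h1mem
    rw [this, hu1, hFF0]; ring
  have hcId4' : ContinuousOn (fun x => FF (u x) + (x-1) * (f (u x) * v1 x)) (Icc (0:ℝ) 1) :=
    hFFucont.add (((continuousOn_id.sub continuousOn_const)).mul (hfu.mul hc1))
  have Id4' : ∫ x in (0:ℝ)..1, (FF (u x) + (x-1) * (f (u x) * v1 x)) = 0 := by
    have hGc : ContinuousOn (fun x => (x-1) * FF (u x)) (Icc (0:ℝ) 1) :=
      (continuousOn_id.sub continuousOn_const).mul hFFucont
    have hGd : ∀ x ∈ Ioo (0:ℝ) 1, HasDerivAt (fun x => (x-1) * FF (u x))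
        (FF (u x) + (x-1) * (f (u x) * v1 x)) x := by
      intro x hx
      have hxm : HasDerivAt (fun y : ℝ => y - 1) (1:ℝ) x := by
        simpa using (hasDerivAt_id x).sub_const (1:ℝ)
      have := hxm.mul (hFFud x hx)
      refine this.congr_deriv ?_; first | ring1 | (simp only [id_eq]; ring1) | (push_cast; ring1) | (simp only [id_eq]; push_cast; ring1)
    have := ftc_sub hGc hGd hcId4' h0mem h1mem
    rw [this, hu0, hFF0]; ring
  -- scalar quantities
  set A := ∫ x in (0:ℝ)..1, v2 x ^ 2 with hAdef
  set W := ∫ x in (0:ℝ)..1, v4 x * u x with hWdef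
  set Phi := ∫ x in (0:ℝ)..1, FF (u x) with hPdef
  set S := v2 0 + v2 1 with hSdef
  have hWA : W = A := by
    have h := Id2
    rw [intervalIntegral.integral_sub (hint (g := fun x => v4 x * u x) (hc4.mul hcu)) (hint (g := fun x => v2 x ^ 2) (hc2.pow 2))] at h
    rw [hWdef, hAdef]; linarith only [h]
  have hA0 : 0 ≤ A := by
    apply intervalIntegral.integral_nonneg (by norm_num)
    intro t _; positivity
  have hcxfv1 : ContinuousOn (fun x => x * (f (u x) * v1 x)) (Icc (0:ℝ) 1) :=
    continuousOn_id.mul (hfu.mul hc1)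
  have hcxfv1' : ContinuousOn (fun x => (x-1) * (f (u x) * v1 x)) (Icc (0:ℝ) 1) :=
    (continuousOn_id.sub continuousOn_const).mul (hfu.mul hc1)
  have hmemIcc : ∀ x ∈ uIcc (0:ℝ) 1, x ∈ Icc (0:ℝ) 1 := by
    intro x hx; rwa [uIcc_of_le (by norm_num : (0:ℝ) ≤ 1)] at hx
  have hQ1 : v2 1 ^ 2 = 3*A + 2*(lam * Phi) := by
    have hcg1 : ContinuousOn (fun x => v4 x * (x * v1 x)) (Icc (0:ℝ) 1) :=
      hc4.mul (continuousOn_id.mul hc1)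
    have hcg2 : ContinuousOn (fun x => lam * (x * (f (u x) * v1 x))) (Icc (0:ℝ) 1) :=
      continuousOn_const.mul hcxfv1
    have heq := eq_on_Icc01 hcg1 hcg2 (fun x hx => by rw [hode x hx]; ring)
    have h1 : ∫ x in (0:ℝ)..1, v4 x * (x * v1 x)
        = lam * ∫ x in (0:ℝ)..1, x * (f (u x) * v1 x) := by
      rw [← intervalIntegral.integral_const_mul]
      exact intervalIntegral.integral_congr (fun x hx => heq x (hmemIcc x hx))
    have h2 : ∫ x in (0:ℝ)..1, x * (f (u x) * v1 x) = - Phi := by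
      have h := Id4
      rw [intervalIntegral.integral_add (hint hFFucont) (hint hcxfv1)] at h
      rw [hPdef]; linarith only [h]
    have h3 := Id3
    rw [intervalIntegral.integral_sub (hint hcg1)
      (hint (g := fun x => 3/2 * v2 x ^ 2) (continuousOn_const.mul (hc2.pow 2))), h1, h2,
      intervalIntegral.integral_const_mul] at h3
    rw [← hAdef] at h3
    linarith only [h3]
  have hQ0 : v2 0 ^ 2 = 3*A + 2*(lam * Phi) := by
    have hcg1 : ContinuousOn (fun x => v4 x * ((x-1) * v1 x)) (Icc (0:ℝ) 1) :=
      hc4.mul ((continuousOn_id.sub continuousOn_const).mul hc1)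
    have hcg2 : ContinuousOn (fun x => lam * ((x-1) * (f (u x) * v1 x))) (Icc (0:ℝ) 1) :=
      continuousOn_const.mul hcxfv1'
    have heq := eq_on_Icc01 hcg1 hcg2 (fun x hx => by rw [hode x hx]; ring)
    have h1 : ∫ x in (0:ℝ)..1, v4 x * ((x-1) * v1 x)
        = lam * ∫ x in (0:ℝ)..1, (x-1) * (f (u x) * v1 x) := by
      rw [← intervalIntegral.integral_const_mul]
      exact intervalIntegral.integral_congr (fun x hx => heq x (hmemIcc x hx))
    have h2 : ∫ x in (0:ℝ)..1, (x-1) * (f (u x) * v1 x) = - Phi := by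
      have h := Id4'
      rw [intervalIntegral.integral_add (hint hFFucont) (hint hcxfv1')] at h
      rw [hPdef]; linarith only [h]
    have h3 := Id3'
    rw [intervalIntegral.integral_sub (hint hcg1)
      (hint (g := fun x => 3/2 * v2 x ^ 2) (continuousOn_const.mul (hc2.pow 2))), h1, h2,
      intervalIntegral.integral_const_mul] at h3
    rw [← hAdef] at h3
    linarith only [h3]
  have hPhiW : lam * Phi ≤ W := by
    have hpt : ∀ x ∈ Icc (0:ℝ) 1, lam * FF (u x) ≤ v4 x * u x := by
      apply le_on_Icc01 (g := fun x => lam * FF (u x)) (h := fun x => v4 x * u x) (continuousOn_const.mul hFFucont) (hc4.mul hcu)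
      intro x hx
      have hxI := Ioo_subset_Icc_self hx
      rw [hode x hx]
      have h1 : FF (u x) ≤ u x * f (u x) := hFFle (u x) (hun x hxI) (hum x hxI)
      exact le_trans (mul_le_mul_of_nonneg_left h1 hlam0) (le_of_eq (by ring))
    calc lam * Phi = ∫ x in (0:ℝ)..1, lam * FF (u x) := by
          rw [intervalIntegral.integral_const_mul]
      _ ≤ W := intervalIntegral.integral_mono_on (by norm_num)
          (hint (continuousOn_const.mul hFFucont)) (hint (hc4.mul hcu)) hpt
  set β := max (v2 0) (v2 1) with hβdef
  have hQβ : β ^ 2 = 3*A + 2*(lam * Phi) := by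
    rcases max_choice (v2 0) (v2 1) with h | h <;> rw [hβdef, h]
    · exact hQ0
    · exact hQ1
  have hβ5W : β ^ 2 ≤ 5 * W := by
    rw [hQβ]
    linarith only [hPhiW, hWA]
  -- monotonicity tools
  have mono_tool : ∀ (g g' : ℝ → ℝ), ContinuousOn g (Icc 0 1) →
      (∀ x ∈ Ioo (0:ℝ) 1, HasDerivAt g (g' x) x) → (∀ x ∈ Ioo (0:ℝ) 1, 0 ≤ g' x) →
      MonotoneOn g (Icc (0:ℝ) 1) := by
    intro g g' hc hd hn
    apply monotoneOn_of_deriv_nonneg (convex_Icc 0 1) hc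
    · rw [interior_Icc]; exact fun x hx => (hd x hx).differentiableAt.differentiableWithinAt
    · rw [interior_Icc]; intro x hx; rw [(hd x hx).deriv]; exact hn x hx
  have anti_tool : ∀ (g g' : ℝ → ℝ), ContinuousOn g (Icc 0 1) →
      (∀ x ∈ Ioo (0:ℝ) 1, HasDerivAt g (g' x) x) → (∀ x ∈ Ioo (0:ℝ) 1, g' x ≤ 0) →
      AntitoneOn g (Icc (0:ℝ) 1) := by
    intro g g' hc hd hn
    apply antitoneOn_of_deriv_nonpos (convex_Icc 0 1) hc
    · rw [interior_Icc]; exact fun x hx => (hd x hx).differentiableAt.differentiableWithinAt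
    · rw [interior_Icc]; intro x hx; rw [(hd x hx).deriv]; exact hn x hx
  have hcontra : (∀ x ∈ Icc (0:ℝ) 1, u x ≤ 0) → False := by
    intro h
    obtain ⟨y, hy, hne⟩ := hune
    exact hne (le_antisymm (h y (Ioo_subset_Icc_self hy)) (hupos y hy))
  -- v2 is convex, bounded by β
  have hconv : ConvexOn ℝ (Icc (0:ℝ) 1) v2 := by
    apply convexOn_of_deriv2_nonneg (convex_Icc 0 1) hc2
    · rw [interior_Icc]; exact fun x hx => (hD2 x hx).differentiableAt.differentiableWithinAt
    · rw [interior_Icc]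
      have hdv3 : DifferentiableOn ℝ v3 (Ioo (0:ℝ) 1) :=
        fun x hx => (hD3 x hx).differentiableAt.differentiableWithinAt
      exact hdv3.congr (fun x hx => (hD2 x hx).deriv)
    · rw [interior_Icc]
      intro x hx
      have hev : deriv v2 =ᶠ[nhds x] v3 :=
        Filter.eventuallyEq_of_mem (Ioo_mem_nhds hx.1 hx.2) (fun y hy => (hD2 y hy).deriv)
      have h2 : deriv^[2] v2 x = deriv (deriv v2) x := rfl
      rw [h2, hev.deriv_eq, (hD3 x hx).deriv]
      exact hv4n x (Ioo_subset_Icc_self hx)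
  have hv2β : ∀ x ∈ Icc (0:ℝ) 1, v2 x ≤ β := by
    intro x hx
    have h := hconv.2 h0mem h1mem (sub_nonneg.2 hx.2) hx.1 (by ring)
    have harg : (1-x) • (0:ℝ) + x • (1:ℝ) = x := by simp
    rw [harg] at h
    simp only [smul_eq_mul] at h
    have h0β : v2 0 ≤ β := le_max_left _ _
    have h1β : v2 1 ≤ β := le_max_right _ _
    calc v2 x ≤ (1-x) * v2 0 + x * v2 1 := h
    _ ≤ (1-x) * β + x * β := add_le_add
        (mul_le_mul_of_nonneg_left h0β (by linarith only [hx.2]))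
        (mul_le_mul_of_nonneg_left h1β hx.1)
    _ = β := by ring
  have hβpos : 0 < β := by
    by_contra hβ
    push_neg at hβ
    have hv1anti : AntitoneOn v1 (Icc (0:ℝ) 1) :=
      anti_tool v1 v2 hc1 hD1
        (fun x hx => le_trans (hv2β x (Ioo_subset_Icc_self hx)) hβ)
    have hv1le : ∀ x ∈ Icc (0:ℝ) 1, v1 x ≤ 0 := by
      intro x hx
      have := hv1anti h0mem hx hx.1
      rwa [hv10] at this
    have huanti : AntitoneOn u (Icc (0:ℝ) 1) :=
      anti_tool u v1 hcu hDu (fun x hx => hv1le x (Ioo_subset_Icc_self hx))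
    apply hcontra
    intro x hx
    have := huanti h0mem hx hx.1
    rwa [hu0] at this
  -- quadratic bounds on u
  have hw1 : ∀ x ∈ Icc (0:ℝ) 1, 0 ≤ β * x - v1 x := by
    have hm : MonotoneOn (fun x => β * x - v1 x) (Icc (0:ℝ) 1) := by
      apply mono_tool _ (fun x => β - v2 x) (((continuous_const.mul continuous_id).continuousOn).sub hc1)
      · intro x hx
        have := ((hasDerivAt_id x).const_mul β).sub (hD1 x hx)
        refine this.congr_deriv ?_; first | ring1 | (simp only [id_eq]; ring1) | (push_cast; ring1) | (simp only [id_eq]; push_cast; ring1)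
      · intro x hx
        have := hv2β x (Ioo_subset_Icc_self hx); linarith only [this]
    intro x hx
    have := hm h0mem hx hx.1
    simp only [mul_zero, hv10, sub_zero] at this
    linarith only [this]
  have huquad : ∀ x ∈ Icc (0:ℝ) 1, u x ≤ β * x^2/2 := by
    have hm : MonotoneOn (fun x => β * x^2/2 - u x) (Icc (0:ℝ) 1) := by
      apply mono_tool _ (fun x => β * x - v1 x)
        ((((continuous_const.mul (continuous_pow 2)).div_const 2).continuousOn).sub hcu)
      · intro x hx
        have := (((hasDerivAt_pow 2 x).const_mul β).div_const 2).sub (hDu x hx)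
        refine this.congr_deriv ?_; first | ring1 | (simp only [id_eq]; ring1) | (push_cast; ring1) | (simp only [id_eq]; push_cast; ring1)
      · exact fun x hx => hw1 x (Ioo_subset_Icc_self hx)
    intro x hx
    have := hm h0mem hx hx.1
    simp only [hu0] at this
    norm_num at this
    linarith only [this]
  have hz1 : ∀ x ∈ Icc (0:ℝ) 1, -(β * (1-x)) - v1 x ≤ 0 := by
    have hm : MonotoneOn (fun x => -(β * (1-x)) - v1 x) (Icc (0:ℝ) 1) := by
      apply mono_tool _ (fun x => β - v2 x)
        (((continuous_const.mul (continuous_const.sub continuous_id)).neg.continuousOn).sub hc1)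
      · intro x hx
        have := (((hasDerivAt_const x (1:ℝ)).sub (hasDerivAt_id x)).const_mul β).neg.sub (hD1 x hx)
        refine this.congr_deriv ?_; first | ring1 | (simp only [id_eq]; ring1) | (push_cast; ring1) | (simp only [id_eq]; push_cast; ring1)
      · intro x hx
        have := hv2β x (Ioo_subset_Icc_self hx); linarith only [this]
    intro x hx
    have := hm hx h1mem hx.2
    simp only [hv11] at this
    norm_num at this
    linarith only [this]
  have huquad' : ∀ x ∈ Icc (0:ℝ) 1, u x ≤ β * (1-x)^2/2 := by
    have hm : AntitoneOn (fun x => β * (1-x)^2/2 - u x) (Icc (0:ℝ) 1) := by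
      apply anti_tool _ (fun x => -(β * (1-x)) - v1 x)
        ((((continuous_const.mul ((continuous_const.sub continuous_id).pow 2)).div_const 2).continuousOn).sub hcu)
      · intro x hx
        have h1x : HasDerivAt (fun y : ℝ => 1 - y) (-1 : ℝ) x := by
          simpa using (hasDerivAt_id x).const_sub (1:ℝ)
        have := (((h1x.pow 2).const_mul β).div_const 2).sub (hDu x hx)
        refine this.congr_deriv ?_; push_cast; ring
      · exact fun x hx => hz1 x (Ioo_subset_Icc_self hx)
    intro x hx
    have := hm hx h1mem hx.2
    simp only [hu1] at this
    norm_num at this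
    linarith only [this]
  -- pointwise estimates
  have hsβ : 0 < Real.sqrt β := Real.sqrt_pos.2 hβpos
  have hsr : 0 < Real.sqrt r := Real.sqrt_pos.2 hr
  have hr2mem : r/2 ∈ Ico (0:ℝ) r := ⟨by positivity, by linarith only [hr]⟩
  have hfr2pos : 0 < f (r/2) := hfpos _ hr2mem
  have hkey : ∀ x ∈ Ioo (0:ℝ) 1, r/2 < u x →
      Real.sqrt r / Real.sqrt β * 2⁻¹ ≤ x * (1-x) := by
    intro x hx hgt
    set c := Real.sqrt r / Real.sqrt β with hcdef
    have hc0 : 0 ≤ c := by positivity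
    have hc2 : c^2 = r / β := by
      rw [hcdef, div_pow, Real.sq_sqrt hr.le, Real.sq_sqrt hβpos.le]
    have hq1 := huquad x (Ioo_subset_Icc_self hx)
    have hq2 := huquad' x (Ioo_subset_Icc_self hx)
    have hx2 : c^2 < x^2 := by
      rw [hc2, div_lt_iff₀ hβpos]; nlinarith only [hgt, hq1]
    have hy2 : c^2 < (1-x)^2 := by
      rw [hc2, div_lt_iff₀ hβpos]; nlinarith only [hgt, hq2]
    have hcx : c < x := by nlinarith only [hx2, hx.1, hc0]
    have hcy : c < 1 - x := by nlinarith only [hy2, hx.2, hc0]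
    nlinarith only [mul_pos (sub_pos.2 hcx) (sub_pos.2 hcy), hcx, hcy, hc0]
  have hP1 : ∀ x ∈ Icc (0:ℝ) 1, v4 x ≤ lam * f (r/2)
      + (2*Real.sqrt β/Real.sqrt r) * (v4 x * (x*(1-x))) := by
    apply le_on_Icc01 (h := fun x => lam * f (r/2) + (2*Real.sqrt β/Real.sqrt r) * (v4 x * (x*(1-x)))) hc4 (continuousOn_const.add (continuousOn_const.mul hcId1))
    intro x hx
    have hxI := Ioo_subset_Icc_self hx
    have hv4x := hv4n x hxI
    have hxx : 0 ≤ x * (1-x) := mul_nonneg hx.1.le (by linarith only [hx.2])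
    rcases le_or_gt (u x) (r/2) with hle | hgt
    · have hfle : f (u x) ≤ f (r/2) := hfmono (humem x hxI) hr2mem hle
      rw [hode x hx]
      have h1 : lam * f (u x) ≤ lam * f (r/2) := mul_le_mul_of_nonneg_left hfle hlam0
      have h2 : 0 ≤ (2*Real.sqrt β/Real.sqrt r) * (v4 x * (x*(1-x))) := by
        apply mul_nonneg (by positivity) (mul_nonneg hv4x hxx)
      rw [hode x hx] at h2
      linarith only [h1, h2]
    · have hbig := hkey x hx hgt
      have h1 : 1 ≤ (2*Real.sqrt β/Real.sqrt r) * (x*(1-x)) := by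
        have he : (2*Real.sqrt β/Real.sqrt r) * (Real.sqrt r/Real.sqrt β * 2⁻¹) = 1 := by
          field_simp
        calc (1:ℝ) = (2*Real.sqrt β/Real.sqrt r) * (Real.sqrt r/Real.sqrt β * 2⁻¹) := he.symm
        _ ≤ (2*Real.sqrt β/Real.sqrt r) * (x*(1-x)) :=
            mul_le_mul_of_nonneg_left hbig (by positivity)
      have h2 : v4 x * 1 ≤ v4 x * ((2*Real.sqrt β/Real.sqrt r) * (x*(1-x))) :=
        mul_le_mul_of_nonneg_left h1 hv4x
      have h3 : 0 ≤ lam * f (r/2) := mul_nonneg hlam0 hfr2pos.le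
      have h4 : v4 x * ((2*Real.sqrt β/Real.sqrt r) * (x*(1-x)))
          = (2*Real.sqrt β/Real.sqrt r) * (v4 x * (x*(1-x))) := by ring
      linarith only [h2, h3, h4]
  have hP2 : ∀ x ∈ Icc (0:ℝ) 1, v4 x * u x ≤ lam * f (r/2) * r
      + (2*Real.sqrt (r*β)) * (v4 x * (x*(1-x))) := by
    apply le_on_Icc01 (g := fun x => v4 x * u x) (h := fun x => lam * f (r/2) * r + (2*Real.sqrt (r*β)) * (v4 x * (x*(1-x)))) (hc4.mul hcu) (continuousOn_const.add (continuousOn_const.mul hcId1))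
    intro x hx
    have hxI := Ioo_subset_Icc_self hx
    have hv4x := hv4n x hxI
    have hxx : 0 ≤ x * (1-x) := mul_nonneg hx.1.le (by linarith only [hx.2])
    have hux0 := hun x hxI
    have huxr := hur x hxI
    rcases le_or_gt (u x) (r/2) with hle | hgt
    · have hfle : f (u x) ≤ f (r/2) := hfmono (humem x hxI) hr2mem hle
      have h1 : lam * f (u x) ≤ lam * f (r/2) := mul_le_mul_of_nonneg_left hfle hlam0
      have h2 : 0 ≤ (2*Real.sqrt (r*β)) * (v4 x * (x*(1-x))) :=
        mul_nonneg (by positivity) (mul_nonneg hv4x hxx)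
      have h4 : v4 x * u x ≤ (lam * f (r/2)) * r := by
        apply mul_le_mul _ (by linarith only [hle, hr]) hux0 (by positivity)
        rw [hode x hx]; exact h1
      linarith only [h2, h4]
    · have hbig := hkey x hx hgt
      have hrβ : Real.sqrt (r*β) = Real.sqrt r * Real.sqrt β := Real.sqrt_mul hr.le β
      have h1 : r ≤ (2*Real.sqrt (r*β)) * (x*(1-x)) := by
        have he : (2*Real.sqrt (r*β)) * (Real.sqrt r/Real.sqrt β * 2⁻¹) = r := by
          have h1 : Real.sqrt r * Real.sqrt r = r := Real.mul_self_sqrt hr.le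
          rw [hrβ]
          field_simp
          linear_combination h1
        calc r = (2*Real.sqrt (r*β)) * (Real.sqrt r/Real.sqrt β * 2⁻¹) := he.symm
        _ ≤ _ := mul_le_mul_of_nonneg_left hbig (by positivity)
      have h2 : v4 x * r ≤ v4 x * ((2*Real.sqrt (r*β)) * (x*(1-x))) :=
        mul_le_mul_of_nonneg_left h1 hv4x
      have h3 : 0 ≤ lam * f (r/2) * r := by positivity
      have h5 : v4 x * ((2*Real.sqrt (r*β)) * (x*(1-x)))
          = (2*Real.sqrt (r*β)) * (v4 x * (x*(1-x))) := by ring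
      linarith only [h2, h3, h5, mul_le_mul_of_nonneg_left huxr.le hv4x]
  -- integrate the pointwise estimates
  have hSle : S ≤ 2*β := by
    rw [hSdef]
    have h1 := le_max_left (v2 0) (v2 1)
    have h2 := le_max_right (v2 0) (v2 1)
    rw [hβdef]; linarith only [h1, h2]
  set J := ∫ x in (0:ℝ)..1, v4 x with hJdef
  have hIP1 : J ≤ lam * f (r/2) + (2*Real.sqrt β/Real.sqrt r) * S := by
    have h1 : J ≤ ∫ x in (0:ℝ)..1,
        (lam * f (r/2) + (2*Real.sqrt β/Real.sqrt r) * (v4 x * (x*(1-x)))) :=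
      intervalIntegral.integral_mono_on (by norm_num) (hint hc4)
        (hint (continuousOn_const.add (continuousOn_const.mul hcId1))) hP1
    rwa [intervalIntegral.integral_add intervalIntegrable_const
      ((hint hcId1).const_mul _), intervalIntegral.integral_const,
      intervalIntegral.integral_const_mul, Id1, smul_eq_mul, sub_zero, one_mul] at h1
  have hIP2 : W ≤ lam * f (r/2) * r + (2*Real.sqrt (r*β)) * S := by
    have h1 : W ≤ ∫ x in (0:ℝ)..1,
        (lam * f (r/2) * r + (2*Real.sqrt (r*β)) * (v4 x * (x*(1-x)))) :=
      intervalIntegral.integral_mono_on (by norm_num) (hint (hc4.mul hcu))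
        (hint (continuousOn_const.add (continuousOn_const.mul hcId1))) hP2
    rwa [intervalIntegral.integral_add intervalIntegrable_const
      ((hint hcId1).const_mul _), intervalIntegral.integral_const,
      intervalIntegral.integral_const_mul, Id1, smul_eq_mul, sub_zero, one_mul] at h1
  -- bound β
  have hβchain : β^2 ≤ 5*(L * f (r/2) * r) + 20*Real.sqrt r*Real.sqrt β*β := by
    have hrβ : Real.sqrt (r*β) = Real.sqrt r * Real.sqrt β := Real.sqrt_mul hr.le β
    have h1 : (2*Real.sqrt (r*β)) * S ≤ (2*Real.sqrt (r*β)) * (2*β) :=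
      mul_le_mul_of_nonneg_left hSle (by positivity)
    have h2 : lam * f (r/2) * r ≤ L * f (r/2) * r :=
      mul_le_mul_of_nonneg_right (mul_le_mul_of_nonneg_right hlamL hfr2pos.le) hr.le
    calc β^2 ≤ 5*W := hβ5W
    _ ≤ 5*(lam * f (r/2) * r + (2*Real.sqrt (r*β))*S) :=
        mul_le_mul_of_nonneg_left hIP2 (by norm_num)
    _ ≤ 5*(lam * f (r/2) * r + (2*Real.sqrt (r*β))*(2*β)) :=
        mul_le_mul_of_nonneg_left (add_le_add_right h1 _) (by norm_num)
    _ = 5*(lam * f (r/2) * r) + 20*Real.sqrt r*Real.sqrt β*β := by rw [hrβ]; ring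
    _ ≤ 5*(L * f (r/2) * r) + 20*Real.sqrt r*Real.sqrt β*β :=
        add_le_add_left (mul_le_mul_of_nonneg_left h2 (by norm_num)) _
  set B₀ := 1600*r + Real.sqrt (10*(L * f (r/2) * r)) + 1 with hB₀def
  have hβB : β ≤ B₀ := by
    have hsq10 : 0 ≤ Real.sqrt (10*(L * f (r/2) * r)) := Real.sqrt_nonneg _
    rcases le_or_gt (Real.sqrt β) (40*Real.sqrt r) with h | h
    · have h1600 : β ≤ 1600*r := by
        have hsq := mul_le_mul h h (Real.sqrt_nonneg β)
          (by positivity : (0:ℝ) ≤ 40*Real.sqrt r)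
        have hrr : Real.sqrt r * Real.sqrt r = r := Real.mul_self_sqrt hr.le
        calc β = Real.sqrt β * Real.sqrt β := (Real.mul_self_sqrt hβpos.le).symm
        _ ≤ (40*Real.sqrt r)*(40*Real.sqrt r) := hsq
        _ = 1600*(Real.sqrt r*Real.sqrt r) := by ring
        _ = 1600*r := by rw [hrr]
      rw [hB₀def]; linarith only [h1600, hsq10]
    · have h20 : 20*Real.sqrt r*Real.sqrt β*β ≤ β^2/2 := by
        have hh : 20*Real.sqrt r ≤ Real.sqrt β/2 := by linarith only [h]
        have hββ : Real.sqrt β * Real.sqrt β = β := Real.mul_self_sqrt hβpos.le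
        have h5 : (20*Real.sqrt r)*(Real.sqrt β*β) ≤ (Real.sqrt β/2)*(Real.sqrt β*β) :=
          mul_le_mul_of_nonneg_right hh (mul_nonneg hsβ.le hβpos.le)
        calc 20*Real.sqrt r*Real.sqrt β*β = (20*Real.sqrt r)*(Real.sqrt β*β) := by ring
        _ ≤ (Real.sqrt β/2)*(Real.sqrt β*β) := h5
        _ = (Real.sqrt β*Real.sqrt β)*β/2 := by ring
        _ = β^2/2 := by rw [hββ]; ring
      have hβ2 : β^2 ≤ 2*(5*(L * f (r/2) * r)) := by linarith only [hβchain, h20]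
      have hβle : β ≤ Real.sqrt (10*(L * f (r/2) * r)) := by
        have h1 : β = Real.sqrt (β^2) := (Real.sqrt_sq hβpos.le).symm
        rw [h1]
        apply Real.sqrt_le_sqrt
        linarith only [hβ2]
      rw [hB₀def]; linarith only [hβle, hr]
  -- bound J
  have hJle : J ≤ L * f (r/2) + 4*B₀*Real.sqrt B₀/Real.sqrt r := by
    have hB₀pos : 0 < B₀ := by
      rw [hB₀def]; positivity
    have h1 : (2*Real.sqrt β/Real.sqrt r) * S ≤ (2*Real.sqrt β/Real.sqrt r) * (2*β) :=
      mul_le_mul_of_nonneg_left hSle (by positivity)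
    have h2 : lam * f (r/2) ≤ L * f (r/2) := mul_le_mul_of_nonneg_right hlamL hfr2pos.le
    have hsmono : Real.sqrt β ≤ Real.sqrt B₀ := Real.sqrt_le_sqrt hβB
    have h3 : (2*Real.sqrt β/Real.sqrt r) * (2*β) ≤ 4*B₀*Real.sqrt B₀/Real.sqrt r := by
      have h4 : β*Real.sqrt β ≤ B₀*Real.sqrt B₀ :=
        mul_le_mul hβB hsmono (Real.sqrt_nonneg β) hB₀pos.le
      calc (2*Real.sqrt β/Real.sqrt r) * (2*β) = 4*(β*Real.sqrt β)/Real.sqrt r := by ring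
      _ ≤ 4*(B₀*Real.sqrt B₀)/Real.sqrt r := by
          apply (div_le_div_iff_of_pos_right hsr).2; linarith only [h4]
      _ = 4*B₀*Real.sqrt B₀/Real.sqrt r := by ring
    linarith only [hIP1, h1, h2, h3]
  -- zero of v3
  have hv3zero : ∃ η ∈ Icc (0:ℝ) 1, v3 η = 0 := by
    have hnot1 : ¬ (∀ x ∈ Ioo (0:ℝ) 1, 0 ≤ v3 x) := by
      intro hpos
      have hmono2 : MonotoneOn v2 (Icc (0:ℝ) 1) := mono_tool v2 v3 hc2 hD2 hpos
      have hv1le : ∀ x ∈ Icc (0:ℝ) 1, v1 x ≤ 0 := by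
        intro x hx
        rcases le_or_gt (v2 x) 0 with h2 | h2
        · have hftc : ∫ t in (0:ℝ)..x, v2 t = v1 x - v1 0 := ftc_sub hc1 hD1 hc2 h0mem hx
          have hle : ∫ t in (0:ℝ)..x, v2 t ≤ ∫ t in (0:ℝ)..x, (0:ℝ) := by
            apply intervalIntegral.integral_mono_on hx.1
              ((hc2.mono (by rw [uIcc_of_le hx.1]; exact Icc_subset_Icc le_rfl hx.2)).intervalIntegrable)
              intervalIntegrable_const
            intro t ht
            exact le_trans (hmono2 ⟨ht.1, le_trans ht.2 hx.2⟩ hx ht.2) h2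
          simp only [intervalIntegral.integral_zero] at hle
          rw [hv10] at hftc; linarith only [hle, hftc]
        · have hftc : ∫ t in x..1, v2 t = v1 1 - v1 x := ftc_sub hc1 hD1 hc2 hx h1mem
          have hge : 0 ≤ ∫ t in x..1, v2 t := by
            apply intervalIntegral.integral_nonneg hx.2
            intro t ht
            exact le_trans h2.le (hmono2 hx ⟨le_trans hx.1 ht.1, ht.2⟩ ht.1)
          rw [hv11] at hftc; linarith only [hge, hftc]
      have huanti : AntitoneOn u (Icc (0:ℝ) 1) :=
        anti_tool u v1 hcu hDu (fun x hx => hv1le x (Ioo_subset_Icc_self hx))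
      apply hcontra
      intro x hx
      have := huanti h0mem hx hx.1
      rwa [hu0] at this
    have hnot2 : ¬ (∀ x ∈ Ioo (0:ℝ) 1, v3 x ≤ 0) := by
      intro hneg
      have hanti2 : AntitoneOn v2 (Icc (0:ℝ) 1) := anti_tool v2 v3 hc2 hD2 hneg
      have hv1ge : ∀ x ∈ Icc (0:ℝ) 1, 0 ≤ v1 x := by
        intro x hx
        rcases le_or_gt (v2 x) 0 with h2 | h2
        · have hftc : ∫ t in x..1, v2 t = v1 1 - v1 x := ftc_sub hc1 hD1 hc2 hx h1mem
          have hle : ∫ t in x..1, v2 t ≤ ∫ t in x..1, (0:ℝ) := by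
            apply intervalIntegral.integral_mono_on hx.2
              ((hc2.mono (by rw [uIcc_of_le hx.2]; exact Icc_subset_Icc hx.1 le_rfl)).intervalIntegrable)
              intervalIntegrable_const
            intro t ht
            exact le_trans (hanti2 hx ⟨le_trans hx.1 ht.1, ht.2⟩ ht.1) h2
          simp only [intervalIntegral.integral_zero] at hle
          rw [hv11] at hftc; linarith only [hle, hftc]
        · have hftc : ∫ t in (0:ℝ)..x, v2 t = v1 x - v1 0 := ftc_sub hc1 hD1 hc2 h0mem hx
          have hge : 0 ≤ ∫ t in (0:ℝ)..x, v2 t := by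
            apply intervalIntegral.integral_nonneg hx.1
            intro t ht
            exact le_trans h2.le (hanti2 ⟨ht.1, le_trans ht.2 hx.2⟩ hx ht.2)
          rw [hv10] at hftc; linarith only [hge, hftc]
      have humono : MonotoneOn u (Icc (0:ℝ) 1) :=
        mono_tool u v1 hcu hDu (fun x hx => hv1ge x (Ioo_subset_Icc_self hx))
      apply hcontra
      intro x hx
      have := humono hx h1mem hx.2
      rwa [hu1] at this
    push_neg at hnot1 hnot2
    obtain ⟨a, ha, hva⟩ := hnot1
    obtain ⟨b, hb, hvb⟩ := hnot2
    have haI : a ∈ Icc (0:ℝ) 1 := Ioo_subset_Icc_self ha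
    have hbI : b ∈ Icc (0:ℝ) 1 := Ioo_subset_Icc_self hb
    have hsub : uIcc a b ⊆ Icc (0:ℝ) 1 := uIcc_subset_Icc haI hbI
    have h0m : (0:ℝ) ∈ uIcc (v3 a) (v3 b) := by
      rw [Set.mem_uIcc]; left; exact ⟨hva.le, hvb.le⟩
    obtain ⟨η, hη, hval⟩ := intermediate_value_uIcc (hc3.mono hsub) h0m
    exact ⟨η, hsub hη, hval⟩
  -- zero of v2
  have hv2zero : ∃ ξ ∈ Icc (0:ℝ) 1, v2 ξ = 0 := by
    have hhalf : (1:ℝ)/2 ∈ Ioo (0:ℝ) 1 := by norm_num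
    have hnot1 : ¬ (∀ x ∈ Ioo (0:ℝ) 1, 0 < v2 x) := by
      intro hpos
      have hnn : ∀ x ∈ Icc (0:ℝ) 1, 0 ≤ v2 x :=
        le_on_Icc01 continuousOn_const hc2 (fun x hx => (hpos x hx).le)
      have : 0 < ∫ x in (0:ℝ)..1, v2 x :=
        intervalIntegral.integral_pos one_pos hc2 (fun x hx => hnn x ⟨hx.1.le, hx.2⟩)
          ⟨1/2, Ioo_subset_Icc_self hhalf, hpos _ hhalf⟩
      rw [E1] at this; exact lt_irrefl 0 this
    have hnot2 : ¬ (∀ x ∈ Ioo (0:ℝ) 1, v2 x < 0) := by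
      intro hneg
      have hnn : ∀ x ∈ Icc (0:ℝ) 1, 0 ≤ -v2 x :=
        le_on_Icc01 continuousOn_const hc2.neg (fun x hx => by linarith only [hneg x hx])
      have hpos : 0 < ∫ x in (0:ℝ)..1, -v2 x :=
        intervalIntegral.integral_pos one_pos hc2.neg (fun x hx => hnn x ⟨hx.1.le, hx.2⟩)
          ⟨1/2, Ioo_subset_Icc_self hhalf, by linarith only [hneg _ hhalf]⟩
      rw [intervalIntegral.integral_neg, E1] at hpos
      norm_num at hpos
    push_neg at hnot1 hnot2
    obtain ⟨a, ha, hva⟩ := hnot1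
    obtain ⟨b, hb, hvb⟩ := hnot2
    have haI : a ∈ Icc (0:ℝ) 1 := Ioo_subset_Icc_self ha
    have hbI : b ∈ Icc (0:ℝ) 1 := Ioo_subset_Icc_self hb
    have hsub : uIcc a b ⊆ Icc (0:ℝ) 1 := uIcc_subset_Icc haI hbI
    have h0m : (0:ℝ) ∈ uIcc (v2 a) (v2 b) := by
      rw [Set.mem_uIcc]; left; exact ⟨hva, hvb⟩
    obtain ⟨ξ, hξ, hval⟩ := intermediate_value_uIcc (hc2.mono hsub) h0m
    exact ⟨ξ, hsub hξ, hval⟩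
  -- sup bounds
  have hJ0 : 0 ≤ J :=
    intervalIntegral.integral_nonneg (by norm_num) hv4n
  have hae : 0 ≤ᵐ[MeasureTheory.volume.restrict (Ioc (0:ℝ) 1)] v4 := by
    refine MeasureTheory.ae_restrict_of_forall_mem measurableSet_Ioc ?_
    exact fun t ht => hv4n t ⟨ht.1.le, ht.2⟩
  have hv3bdd : ∀ x ∈ Icc (0:ℝ) 1, |v3 x| ≤ J := by
    obtain ⟨η, hη, hval⟩ := hv3zero
    intro x hx
    rcases le_total η x with hxy | hxy
    · have hftc : ∫ t in η..x, v4 t = v3 x - v3 η := ftc_sub hc3 hD3 hc4 hη hx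
      have h1 : 0 ≤ ∫ t in η..x, v4 t :=
        intervalIntegral.integral_nonneg hxy
          (fun t ht => hv4n t ⟨le_trans hη.1 ht.1, le_trans ht.2 hx.2⟩)
      have h2 : ∫ t in η..x, v4 t ≤ J :=
        intervalIntegral.integral_mono_interval hη.1 hxy hx.2 hae (hint hc4)
      rw [hval, sub_zero] at hftc
      rw [abs_le]; constructor <;> linarith only [h1, h2, hftc, hJ0]
    · have hftc : ∫ t in x..η, v4 t = v3 η - v3 x := ftc_sub hc3 hD3 hc4 hx hη
      have h1 : 0 ≤ ∫ t in x..η, v4 t :=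
        intervalIntegral.integral_nonneg hxy
          (fun t ht => hv4n t ⟨le_trans hx.1 ht.1, le_trans ht.2 hη.2⟩)
      have h2 : ∫ t in x..η, v4 t ≤ J :=
        intervalIntegral.integral_mono_interval hx.1 hxy hη.2 hae (hint hc4)
      rw [hval, zero_sub] at hftc
      rw [abs_le]; constructor <;> linarith only [h1, h2, hftc, hJ0]
  have hv2bdd : ∀ x ∈ Icc (0:ℝ) 1, |v2 x| ≤ J := by
    obtain ⟨ξ, hξ, hval⟩ := hv2zero
    intro x hx
    have hftc : ∫ t in ξ..x, v3 t = v2 x - v2 ξ := ftc_sub hc2 hD2 hc3 hξ hx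
    have hbnd : |∫ t in ξ..x, v3 t| ≤ J * |x - ξ| := by
      have h := intervalIntegral.norm_integral_le_of_norm_le_const
        (C := J) (f := v3) (a := ξ) (b := x) ?_
      · rwa [Real.norm_eq_abs] at h
      · intro t ht
        have htI : t ∈ Icc (0:ℝ) 1 := uIcc_subset_Icc hξ hx (uIoc_subset_uIcc ht)
        rw [Real.norm_eq_abs]
        exact hv3bdd t htI
    have hxd : |x - ξ| ≤ 1 := by
      rw [abs_le]; constructor <;> [linarith only [hx.1, hξ.2]; linarith only [hx.2, hξ.1]]
    have : |v2 x| = |∫ t in ξ..x, v3 t| := by rw [hftc, hval, sub_zero]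
    rw [this]
    calc |∫ t in ξ..x, v3 t| ≤ J * |x - ξ| := hbnd
    _ ≤ J * 1 := mul_le_mul_of_nonneg_left hxd hJ0
    _ = J := mul_one J
  have hv1bdd : ∀ x ∈ Icc (0:ℝ) 1, |v1 x| ≤ J := by
    intro x hx
    have hftc : ∫ t in (0:ℝ)..x, v2 t = v1 x - v1 0 := ftc_sub hc1 hD1 hc2 h0mem hx
    have hbnd : |∫ t in (0:ℝ)..x, v2 t| ≤ J * |x - 0| := by
      have h := intervalIntegral.norm_integral_le_of_norm_le_const
        (C := J) (f := v2) (a := 0) (b := x) ?_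
      · rwa [Real.norm_eq_abs] at h
      · intro t ht
        have htI : t ∈ Icc (0:ℝ) 1 := uIcc_subset_Icc h0mem hx (uIoc_subset_uIcc ht)
        rw [Real.norm_eq_abs]
        exact hv2bdd t htI
    have hxd : |x - 0| ≤ 1 := by
      rw [abs_le]; constructor <;> [linarith only [hx.1]; linarith only [hx.2]]
    have : |v1 x| = |∫ t in (0:ℝ)..x, v2 t| := by rw [hftc, hv10, sub_zero]
    rw [this]
    calc |∫ t in (0:ℝ)..x, v2 t| ≤ J * |x - 0| := hbnd
    _ ≤ J * 1 := mul_le_mul_of_nonneg_left hxd hJ0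
    _ = J := mul_one J
  have hB₀pos : 0 < B₀ := by rw [hB₀def]; positivity
  have hmid : 0 ≤ L * f (r/2) + 4*B₀*Real.sqrt B₀/Real.sqrt r := by
    have h1 : 0 ≤ L * f (r/2) := mul_nonneg hL0 hfr2pos.le
    have h2 : 0 ≤ 4*B₀*Real.sqrt B₀/Real.sqrt r := by positivity
    linarith only [h1, h2]
  intro k hk x hx
  interval_cases k
  · rw [hzero]
    have h1 := hun x hx
    have h2 := (hur x hx).le
    rw [abs_le]
    constructor
    · linarith only [h1, hmid, hr]
    · linarith only [h2, hmid]
  · rw [← hv1def]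
    exact le_trans (hv1bdd x hx) (by linarith only [hJle, hr])
  · rw [← hv2def]
    exact le_trans (hv2bdd x hx) (by linarith only [hJle, hr])
  · rw [← hv3def]
    exact le_trans (hv3bdd x hx) (by linarith only [hJle, hr])

/-- A priori `C³`-bound for positive solutions, uniform over bounded intervals of `lam`. -/
theorem apriori_C3_bound
    (f : ℝ → ℝ) (r : ℝ) (hr : 0 < r)
    (hf : ContDiffOn ℝ 1 f (Set.Ico 0 r))
    (hfpos : ∀ s ∈ Set.Ico (0:ℝ) r, 0 < f s)
    (hf' : ∀ s ∈ Set.Ioo (0:ℝ) r, 0 < derivWithin f (Set.Ico 0 r) s)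
    (hlim : ∃ a > (0:ℝ), ∀ᶠ s in nhdsWithin r (Set.Iio r), a ≤ (r - s) * f s)
    (I : Set ℝ) (hI : I ⊆ Set.Ici 0) (hIbdd : Bornology.IsBounded I)
    (hIint : I.OrdConnected) :
    ∃ C : ℝ, 0 < C ∧ ∀ lam ∈ I, ∀ u : ℝ → ℝ, IsPosSol f r lam u →
      ∀ k : ℕ, k ≤ 3 → ∀ x ∈ Set.Icc (0:ℝ) 1,
        |iteratedDerivWithin k u (Set.Icc 0 1) x| ≤ C := by
  obtain ⟨R, hR⟩ : ∃ R : ℝ, ∀ x ∈ I, x ≤ R := by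
    obtain ⟨R, hR⟩ := hIbdd.subset_closedBall 0
    refine ⟨R, fun x hx => ?_⟩
    have := hR hx
    rw [Metric.mem_closedBall, Real.dist_eq, sub_zero] at this
    exact (abs_le.1 this).2
  set L := max R 0 with hLdef
  have hL0 : 0 ≤ L := le_max_right R 0
  have hfr2pos : 0 < f (r/2) := hfpos _ ⟨by positivity, by linarith only [hr]⟩
  refine ⟨r + (L * f (r/2) + 4*(1600*r + Real.sqrt (10*(L * f (r/2) * r)) + 1) *
    Real.sqrt (1600*r + Real.sqrt (10*(L * f (r/2) * r)) + 1) / Real.sqrt r) + 1, ?_, ?_⟩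
  · have h1 : 0 ≤ L * f (r/2) := mul_nonneg hL0 hfr2pos.le
    have h2 : 0 ≤ 4*(1600*r + Real.sqrt (10*(L * f (r/2) * r)) + 1) *
        Real.sqrt (1600*r + Real.sqrt (10*(L * f (r/2) * r)) + 1) / Real.sqrt r := by
      have hB : 0 < 1600*r + Real.sqrt (10*(L * f (r/2) * r)) + 1 := by positivity
      positivity
    linarith only [h1, h2, hr]
  · intro lam hlam u hu
    exact aprioriKey f r hr hf hfpos hf' lam u hu (hI hlam)
      L (le_trans (hR lam hlam) (le_max_left R 0)) hL0
end

section
/- Let λ > 0 and let u ∈ C⁴([0,1]) satisfy u(0) = u(1) = u'(0) = u'(1) = 0, u ≥ 0 on (0,1), u not identically zero, 0 ≤ u(x) ≤ r on [0,1], and u''''(x) = λ f(u(x)) at every x ∈ (0,1) with u(x) < r. Then u(x) < r for all x ∈ [0,1]. -/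
open Set Filter

lemma aux_hasDerivAt {u : ℝ → ℝ} (hu : ContDiffOn ℝ 4 u (Set.Icc 0 1))
    (n : ℕ) (hn : n < 4) {x : ℝ} (hx : x ∈ Set.Ioo (0:ℝ) 1) :
    HasDerivAt (iteratedDerivWithin n u (Set.Icc 0 1))
      (iteratedDerivWithin (n+1) u (Set.Icc 0 1) x) x := by
  have hI : UniqueDiffOn ℝ (Set.Icc (0:ℝ) 1) := uniqueDiffOn_Icc one_pos
  have hmem : Set.Icc (0:ℝ) 1 ∈ nhds x := Icc_mem_nhds hx.1 hx.2
  have hxI : x ∈ Set.Icc (0:ℝ) 1 := ⟨hx.1.le, hx.2.le⟩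
  have hdiff : DifferentiableOn ℝ (iteratedDerivWithin n u (Set.Icc 0 1)) (Set.Icc 0 1) :=
    hu.differentiableOn_iteratedDerivWithin (by exact_mod_cast hn) hI
  have hdAt : DifferentiableAt ℝ (iteratedDerivWithin n u (Set.Icc 0 1)) x :=
    (hdiff x hxI).differentiableAt hmem
  have h1 : iteratedDerivWithin (n+1) u (Set.Icc 0 1) x
      = deriv (iteratedDerivWithin n u (Set.Icc 0 1)) x := by
    rw [iteratedDerivWithin_succ, derivWithin_of_mem_nhds hmem]
  rw [h1]
  exact hdAt.hasDerivAt

set_option maxHeartbeats 1000000 in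
/-- Any nonnegative, not identically zero, clamped `C⁴` function `u` with `0 ≤ u ≤ r`
which satisfies `u'''' = lam * f (u)` wherever `u < r` must in fact satisfy `u < r`
everywhere on `[0,1]`. -/
theorem solutions_stay_below_singularity
    (f : ℝ → ℝ) (r : ℝ) (hr : 0 < r)
    (hf : ContinuousOn f (Set.Ico 0 r))
    (hfpos : ∀ s ∈ Set.Ico (0:ℝ) r, 0 < f s)
    (hlim : ∃ a > (0:ℝ), ∀ᶠ s in nhdsWithin r (Set.Iio r), a ≤ (r - s) * f s)
    (lam : ℝ) (hlam : 0 < lam)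
    (u : ℝ → ℝ)
    (hu : ContDiffOn ℝ 4 u (Set.Icc 0 1))
    (hbc0 : u 0 = 0) (hbc1 : u 1 = 0)
    (hbc0' : derivWithin u (Set.Icc 0 1) 0 = 0)
    (hbc1' : derivWithin u (Set.Icc 0 1) 1 = 0)
    (hnonneg : ∀ x ∈ Set.Ioo (0:ℝ) 1, 0 ≤ u x)
    (hne : ∃ x ∈ Set.Ioo (0:ℝ) 1, u x ≠ 0)
    (hle : ∀ x ∈ Set.Icc (0:ℝ) 1, u x ≤ r)
    (heq : ∀ x ∈ Set.Ioo (0:ℝ) 1, u x < r →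
      iteratedDerivWithin 4 u (Set.Icc 0 1) x = lam * f (u x)) :
    ∀ x ∈ Set.Icc (0:ℝ) 1, u x < r := by
  by_contra hcon
  push_neg at hcon
  obtain ⟨x₀, hx₀I, hx₀⟩ := hcon
  have hx₀r : u x₀ = r := le_antisymm (hle x₀ hx₀I) hx₀
  have hI : UniqueDiffOn ℝ (Set.Icc (0:ℝ) 1) := uniqueDiffOn_Icc one_pos
  have hucont : ContinuousOn u (Set.Icc 0 1) := hu.continuousOn
  -- the set where u = r
  set T : Set ℝ := Set.Icc 0 1 ∩ u ⁻¹' {r} with hT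
  have hTne : T.Nonempty := ⟨x₀, hx₀I, hx₀r⟩
  have hTc : IsClosed T := hucont.preimage_isClosed_of_isClosed isClosed_Icc isClosed_singleton
  have hTbdd : BddBelow T := ⟨0, fun x hx => hx.1.1⟩
  set α := sInf T with hα
  have hαT : α ∈ T := hTc.csInf_mem hTne hTbdd
  have hαI : α ∈ Set.Icc (0:ℝ) 1 := hαT.1
  have huα : u α = r := hαT.2
  have hα0 : 0 < α := by
    rcases hαI.1.lt_or_eq with h | h
    · exact h
    · exfalso; rw [← h] at huα; rw [hbc0] at huα; linarith
  have hα1 : α < 1 := by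
    rcases hαI.2.lt_or_eq with h | h
    · exact h
    · exfalso; rw [h] at huα; rw [hbc1] at huα; linarith
  have hlt : ∀ x, 0 ≤ x → x < α → u x < r := by
    intro x hx0 hxα
    have hxI : x ∈ Set.Icc (0:ℝ) 1 := ⟨hx0, hxα.le.trans hαI.2⟩
    rcases (hle x hxI).lt_or_eq with h | h
    · exact h
    · exact absurd (csInf_le hTbdd ⟨hxI, h⟩) (not_le.mpr hxα)
  -- α is an interior local max, so deriv u α = 0
  have hmemα : Set.Icc (0:ℝ) 1 ∈ nhds α := Icc_mem_nhds hα0 hα1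
  have hmax : IsLocalMax u α := by
    filter_upwards [hmemα] with y hy
    rw [huα]; exact hle y hy
  have hud : DifferentiableAt ℝ u α :=
    ((hu.differentiableOn (by norm_num)) α hαI).differentiableAt hmemα
  have hd0 : deriv u α = 0 := hmax.deriv_eq_zero
  have hu1α : iteratedDerivWithin 1 u (Set.Icc 0 1) α = 0 := by
    rw [iteratedDerivWithin_one, derivWithin_of_mem_nhds hmemα, hd0]
  -- bounds on second and third derivatives
  obtain ⟨M2, hM2⟩ := isCompact_Icc.exists_bound_of_continuousOn
    (hu.continuousOn_iteratedDerivWithin (by norm_num) hI : ContinuousOn (iteratedDerivWithin 2 u (Set.Icc 0 1)) _)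
  obtain ⟨M3, hM3⟩ := isCompact_Icc.exists_bound_of_continuousOn
    (hu.continuousOn_iteratedDerivWithin (by norm_num) hI : ContinuousOn (iteratedDerivWithin 3 u (Set.Icc 0 1)) _)
  set C : ℝ := |M2| + 1 with hC
  have hCpos : 0 < C := by positivity
  -- the liminf hypothesis
  obtain ⟨a, ha, haev⟩ := hlim
  rw [eventually_nhdsWithin_iff, Metric.eventually_nhds_iff] at haev
  obtain ⟨ε, hε, hεa⟩ := haev
  -- continuity of u at α
  have hcu : ContinuousAt u α := (hucont α hαI).continuousAt hmemα
  rw [Metric.continuousAt_iff] at hcu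
  obtain ⟨δ₀, hδ₀, hδ₀u⟩ := hcu ε hε
  set δ : ℝ := min δ₀ α with hδdef
  have hδpos : 0 < δ := lt_min hδ₀ hα0
  have hδα : δ ≤ α := min_le_right _ _
  -- key claim 1 : Taylor-type bound
  have claim1 : ∀ x ∈ Set.Ioo (α - δ) α, 0 < r - u x ∧ r - u x ≤ C * (α - x)^2 := by
    intro x hx
    have hx0 : 0 < x := lt_of_le_of_lt (by linarith) hx.1
    have hxα : x < α := hx.2
    have hxI : x ∈ Set.Ioo (0:ℝ) 1 := ⟨hx0, hxα.trans hα1⟩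
    have hur : u x < r := hlt x hx0.le hxα
    refine ⟨by linarith, ?_⟩
    -- first MVT on u
    have hcont1 : ContinuousOn u (Set.Icc x α) :=
      hucont.mono (Set.Icc_subset_Icc hx0.le hαI.2)
    have hderiv1 : ∀ t ∈ Set.Ioo x α, HasDerivAt u (iteratedDerivWithin 1 u (Set.Icc 0 1) t) t := by
      intro t ht
      have := aux_hasDerivAt hu 0 (by norm_num) (⟨hx0.trans ht.1, ht.2.trans hα1⟩ : t ∈ Set.Ioo (0:ℝ) 1)
      rwa [iteratedDerivWithin_zero] at this
    obtain ⟨ξ, hξ, hξeq⟩ := exists_hasDerivAt_eq_slope u _ hxα hcont1 hderiv1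
    -- second MVT on u'
    have hcont2 : ContinuousOn (iteratedDerivWithin 1 u (Set.Icc 0 1)) (Set.Icc ξ α) :=
      (hu.continuousOn_iteratedDerivWithin (by norm_num) hI).mono
        (Set.Icc_subset_Icc (hx0.trans hξ.1).le hαI.2)
    have hderiv2 : ∀ t ∈ Set.Ioo ξ α,
        HasDerivAt (iteratedDerivWithin 1 u (Set.Icc 0 1))
          (iteratedDerivWithin 2 u (Set.Icc 0 1) t) t := by
      intro t ht
      exact aux_hasDerivAt hu 1 (by norm_num)
        ⟨(hx0.trans hξ.1).trans ht.1, ht.2.trans hα1⟩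
    obtain ⟨η, hη, hηeq⟩ := exists_hasDerivAt_eq_slope _ _ hξ.2 hcont2 hderiv2
    have hηI : η ∈ Set.Icc (0:ℝ) 1 :=
      ⟨(hx0.trans (hξ.1.trans hη.1)).le, (hη.2.trans hα1).le⟩
    have hbound2 : |iteratedDerivWithin 2 u (Set.Icc 0 1) η| ≤ M2 := hM2 η hηI
    rw [hu1α] at hηeq
    -- u1 ξ = -(u2 η) * (α - ξ)
    have hξα : ξ < α := hξ.2
    have hax : (0:ℝ) < α - x := by linarith
    have haξ : (0:ℝ) < α - ξ := by linarith [hξ.2]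
    have haξne : α - ξ ≠ 0 := ne_of_gt haξ
    have haxne : α - x ≠ 0 := ne_of_gt hax
    rw [eq_div_iff haξne] at hηeq
    rw [eq_div_iff haxne] at hξeq
    have hM2nn : 0 ≤ M2 := (abs_nonneg _).trans (hM2 α hαI)
    have h2 : -(iteratedDerivWithin 2 u (Set.Icc 0 1) η) ≤ M2 := by
      have := abs_le.mp hbound2
      linarith [this.1]
    have hstep1 : iteratedDerivWithin 1 u (Set.Icc 0 1) ξ ≤ M2 * (α - ξ) := by
      have h4 : iteratedDerivWithin 1 u (Set.Icc 0 1) ξ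
          = -(iteratedDerivWithin 2 u (Set.Icc 0 1) η) * (α - ξ) := by
        linear_combination hηeq
      rw [h4]
      exact mul_le_mul_of_nonneg_right h2 haξ.le
    have hstep2 : u α - u x ≤ M2 * (α - ξ) * (α - x) := by
      have h5 : u α - u x = iteratedDerivWithin 1 u (Set.Icc 0 1) ξ * (α - x) := by
        linear_combination -hξeq
      rw [h5]
      exact mul_le_mul_of_nonneg_right hstep1 hax.le
    have hM2C : M2 ≤ C := by
      have := le_abs_self M2; simp only [hC]; linarith
    rw [huα] at hstep2
    have hξx : α - ξ ≤ α - x := by linarith [hξ.1]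
    have hA : M2 * (α - ξ) * (α - x) ≤ M2 * (α - x) * (α - x) :=
      mul_le_mul_of_nonneg_right (mul_le_mul_of_nonneg_left hξx hM2nn) hax.le
    have hB2 : M2 * (α - x) * (α - x) ≤ C * (α - x) * (α - x) :=
      mul_le_mul_of_nonneg_right (mul_le_mul_of_nonneg_right hM2C hax.le) hax.le
    have hC2 : C * (α - x) * (α - x) = C * (α - x) ^ 2 := by ring
    linarith [hstep2, hA, hB2]
  -- key claim 2 : lower bound on fourth derivative
  set c : ℝ := lam * a / C with hc
  have hcpos : 0 < c := by rw [hc]; exact div_pos (mul_pos hlam ha) hCpos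
  have claim2 : ∀ x ∈ Set.Ioo (α - δ) α, c / (α - x)^2 ≤ iteratedDerivWithin 4 u (Set.Icc 0 1) x := by
    intro x hx
    have hx0 : 0 < x := lt_of_le_of_lt (by linarith) hx.1
    have hxα : x < α := hx.2
    have hxI : x ∈ Set.Ioo (0:ℝ) 1 := ⟨hx0, hxα.trans hα1⟩
    have hur : u x < r := hlt x hx0.le hxα
    obtain ⟨hpos, hub⟩ := claim1 x hx
    have hεx : dist (u x) r < ε := by
      have hd : dist x α < δ₀ := by
        rw [Real.dist_eq, abs_of_nonpos (by linarith)]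
        have : α - δ < x := hx.1
        have hδδ : δ ≤ δ₀ := min_le_left _ _
        linarith
      have := hδ₀u hd
      rwa [huα] at this
    have hfa : a ≤ (r - u x) * f (u x) := hεa hεx hur
    have hfpos' : 0 < f (u x) := hfpos (u x) ⟨hnonneg x hxI, hur⟩
    have hflow : a / (r - u x) ≤ f (u x) := by
      rw [div_le_iff₀ hpos]
      calc a ≤ (r - u x) * f (u x) := hfa
        _ = f (u x) * (r - u x) := mul_comm _ _
    have hsq : 0 < (α - x)^2 := pow_pos (by linarith) 2
    have hCsq : 0 < C * (α - x)^2 := mul_pos hCpos hsq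
    have hflow2 : a / (C * (α - x)^2) ≤ a / (r - u x) := by
      apply div_le_div_of_nonneg_left ha.le hpos hub
    have hflow3 : a / (C * (α - x)^2) ≤ f (u x) := hflow2.trans hflow
    rw [heq x hxI hur]
    have hkey : c / (α - x)^2 = lam * (a / (C * (α - x)^2)) := by
      rw [hc]
      field_simp
    rw [hkey]
    exact mul_le_mul_of_nonneg_left hflow3 hlam.le
  -- now derive the contradiction
  set x₁ : ℝ := α - δ/2 with hx₁
  have hx₁α : x₁ < α := by simp only [hx₁]; linarith
  have hx₁mem : x₁ ∈ Set.Ioo (α - δ) α := ⟨by simp only [hx₁]; linarith, hx₁α⟩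
  have hx₁0 : 0 < x₁ := by simp only [hx₁]; linarith
  set B : ℝ := 2 * M3 + c / (α - x₁) + 1 with hB
  have hM3nn : 0 ≤ M3 := (abs_nonneg _).trans (hM3 α hαI)
  have hαx₁ : 0 < α - x₁ := by linarith
  have hBpos : 0 < B := by
    have h6 : 0 ≤ c / (α - x₁) := div_nonneg hcpos.le hαx₁.le
    simp only [hB]; linarith
  set y : ℝ := α - min (c / (2*B)) ((α - x₁)/2) with hy
  have hmin1 : 0 < min (c / (2*B)) ((α - x₁)/2) :=
    lt_min (div_pos hcpos (by linarith)) (by linarith)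
  have hyα : y < α := by simp only [hy]; linarith
  have hx₁y : x₁ < y := by
    have : min (c / (2*B)) ((α - x₁)/2) ≤ (α - x₁)/2 := min_le_right _ _
    simp only [hy]; linarith
  -- MVT on h := u''' - c/(α - ·) over [x₁, y]
  set g : ℝ → ℝ := fun t => iteratedDerivWithin 3 u (Set.Icc 0 1) t - c * (α - t)⁻¹ with hg
  have hgd : ∀ t ∈ Set.Ioo x₁ y, HasDerivAt g
      (iteratedDerivWithin 4 u (Set.Icc 0 1) t - c / (α - t)^2) t := by
    intro t ht
    have htα : t < α := ht.2.trans hyα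
    have ht0 : 0 < t := hx₁0.trans ht.1
    have h3 : HasDerivAt (iteratedDerivWithin 3 u (Set.Icc 0 1))
        (iteratedDerivWithin 4 u (Set.Icc 0 1) t) t :=
      aux_hasDerivAt hu 3 (by norm_num) ⟨ht0, htα.trans hα1⟩
    have hne' : α - t ≠ 0 := by linarith
    have hlin : HasDerivAt (fun s : ℝ => α - s) (-1) t := by
      simpa using (hasDerivAt_id t).const_sub α
    have hinv : HasDerivAt (fun s : ℝ => (α - s)⁻¹) (-(-1) / (α - t)^2) t := hlin.inv hne'
    have hcm : HasDerivAt (fun s : ℝ => c * (α - s)⁻¹) (c * (-(-1) / (α - t)^2)) t :=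
      hinv.const_mul c
    have heqd : c * (-(-1) / (α - t)^2) = c / (α - t)^2 := by ring
    rw [← heqd]
    exact h3.sub hcm
  have hgc : ContinuousOn g (Set.Icc x₁ y) := by
    apply ContinuousOn.sub
    · exact (hu.continuousOn_iteratedDerivWithin (by norm_num) hI).mono
        (Set.Icc_subset_Icc hx₁0.le (hyα.le.trans hαI.2))
    · apply ContinuousOn.mul continuousOn_const
      apply ContinuousOn.inv₀ (by fun_prop)
      intro t ht
      have : t ≤ y := ht.2
      have : t < α := lt_of_le_of_lt this hyα
      intro hh; rw [sub_eq_zero] at hh; exact absurd hh.symm (ne_of_lt this)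
  obtain ⟨ζ, hζ, hζeq⟩ := exists_hasDerivAt_eq_slope g _ hx₁y hgc hgd
  have hζmem : ζ ∈ Set.Ioo (α - δ) α :=
    ⟨lt_trans hx₁mem.1 hζ.1, hζ.2.trans hyα⟩
  have hζnn : 0 ≤ iteratedDerivWithin 4 u (Set.Icc 0 1) ζ - c / (α - ζ)^2 :=
    sub_nonneg.mpr (claim2 ζ hζmem)
  have hgmono : g x₁ ≤ g y := by
    rw [hζeq] at hζnn
    have hden : 0 < y - x₁ := by linarith
    have h7 := mul_nonneg hζnn hden.le
    rw [div_mul_cancel₀ _ (ne_of_gt hden)] at h7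
    linarith
  -- unpack the inequality
  have h3y : |iteratedDerivWithin 3 u (Set.Icc 0 1) y| ≤ M3 :=
    hM3 y ⟨(hx₁0.trans hx₁y).le, hyα.le.trans hαI.2⟩
  have h3x₁ : |iteratedDerivWithin 3 u (Set.Icc 0 1) x₁| ≤ M3 :=
    hM3 x₁ ⟨hx₁0.le, hx₁α.le.trans hαI.2⟩
  have hccle : c * (α - y)⁻¹ ≤ 2 * M3 + c * (α - x₁)⁻¹ := by
    simp only [hg] at hgmono
    linarith [hgmono, (abs_le.mp h3y).2, (abs_le.mp h3y).1,
      (abs_le.mp h3x₁).2, (abs_le.mp h3x₁).1]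
  -- but α - y ≤ c/(2B) forces c * (α-y)⁻¹ ≥ 2B > 2M3 + c/(α-x₁)
  have hαy : α - y ≤ c / (2*B) := by
    simp only [hy]
    have : min (c / (2*B)) ((α - x₁)/2) ≤ c / (2*B) := min_le_left _ _
    linarith
  have hαypos : 0 < α - y := by linarith
  have hlarge : 2*B ≤ c * (α - y)⁻¹ := by
    rw [← div_eq_mul_inv, le_div_iff₀ hαypos]
    have h2B : (2*B) ≠ 0 := by positivity
    calc 2*B * (α - y) ≤ 2*B * (c / (2*B)) := by
          apply mul_le_mul_of_nonneg_left hαy (by linarith)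
      _ = c := by rw [mul_comm, div_mul_cancel₀ c h2B]
  have hfin : c / (α - x₁) = c * (α - x₁)⁻¹ := div_eq_mul_inv c _
  simp only [hB] at hlarge
  rw [hfin] at hlarge
  have hinvpos : 0 < (α - x₁)⁻¹ := inv_pos.mpr hαx₁
  linarith [hccle, hlarge, hM3nn, mul_pos hcpos hinvpos]
end

section
/- There exists λ₀ > 0 such that for every λ > λ₀ the problem (P_λ) has no positive solution u with u(x) < r on [0,1]; equivalently, the set of λ > 0 for which (P_λ) admits a positive solution with values in [0,r) is bounded above. -/
open Set Filter

noncomputable def phi0 : ℝ → ℝ := fun x => x^2 - 2*x^3 + x^4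
noncomputable def phi1 : ℝ → ℝ := fun x => 2*x - 6*x^2 + 4*x^3
noncomputable def phi2 : ℝ → ℝ := fun x => 2 - 12*x + 12*x^2
noncomputable def phi3 : ℝ → ℝ := fun x => -12 + 24*x
noncomputable def Phi : ℝ → ℝ := fun x => x^3/3 - x^4/2 + x^5/5

lemma phi0_nonneg (x : ℝ) : 0 ≤ phi0 x := by
  have : phi0 x = x^2*(1-x)^2 := by simp only [phi0]; ring
  rw [this]; positivity

lemma hasDerivAt_phi0 (x : ℝ) : HasDerivAt phi0 (phi1 x) x := by
  have h := (((hasDerivAt_pow 2 x).sub ((hasDerivAt_pow 3 x).const_mul 2)).add (hasDerivAt_pow 4 x))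
  convert h using 1
  · rfl
  · rfl
  · rfl
  simp [phi1]; ring

lemma hasDerivAt_phi1 (x : ℝ) : HasDerivAt phi1 (phi2 x) x := by
  have h := ((((hasDerivAt_id x).const_mul 2).sub ((hasDerivAt_pow 2 x).const_mul 6)).add ((hasDerivAt_pow 3 x).const_mul 4))
  convert h using 1
  · rfl
  · rfl
  · rfl
  simp [phi2]; ring

lemma hasDerivAt_phi2 (x : ℝ) : HasDerivAt phi2 (phi3 x) x := by
  have h := (((hasDerivAt_const x (2:ℝ)).sub ((hasDerivAt_id x).const_mul 12)).add ((hasDerivAt_pow 2 x).const_mul 12))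
  convert h using 1
  · rfl
  · rfl
  · rfl
  simp [phi3]; ring

lemma hasDerivAt_phi3 (x : ℝ) : HasDerivAt phi3 (24:ℝ) x := by
  have h := ((hasDerivAt_const x (-12:ℝ)).add ((hasDerivAt_id x).const_mul 24))
  convert h using 1
  · rfl
  · rfl
  · rfl
  simp

lemma hasDerivAt_Phi (x : ℝ) : HasDerivAt Phi (phi0 x) x := by
  have h := (((hasDerivAt_pow 3 x).div_const 3).sub ((hasDerivAt_pow 4 x).div_const 2)).add ((hasDerivAt_pow 5 x).div_const 5)
  convert h using 1
  · rfl
  · rfl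
  · rfl
  simp [phi0]; ring

lemma cont_phi0 : Continuous phi0 := by unfold phi0; fun_prop
lemma cont_phi1 : Continuous phi1 := by unfold phi1; fun_prop
lemma cont_phi2 : Continuous phi2 := by unfold phi2; fun_prop
lemma cont_phi3 : Continuous phi3 := by unfold phi3; fun_prop

lemma integral_phi0 : ∫ x in (0:ℝ)..1, phi0 x = 1/30 := by
  rw [intervalIntegral.integral_eq_sub_of_hasDerivAt (fun x _ => hasDerivAt_Phi x)
    (cont_phi0.intervalIntegrable 0 1)]
  norm_num [Phi]

lemma key_bound (f : ℝ → ℝ) (r lam K : ℝ) (hr : 0 < r) (hK : 0 < K)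
    (hKf : ∀ s ∈ Set.Ico (0:ℝ) r, K ≤ f s)
    (hlam : 0 < lam) (u : ℝ → ℝ)
    (hu : ContDiffOn ℝ 4 u (Set.Icc 0 1))
    (hur : ∀ x ∈ Set.Icc (0:ℝ) 1, u x < r)
    (heq : ∀ x ∈ Set.Ioo (0:ℝ) 1, iteratedDerivWithin 4 u (Set.Icc 0 1) x = lam * f (u x))
    (h0 : u 0 = 0) (h1 : u 1 = 0)
    (hd0 : derivWithin u (Set.Icc 0 1) 0 = 0) (hd1 : derivWithin u (Set.Icc 0 1) 1 = 0)
    (hnn : ∀ x ∈ Set.Ioo (0:ℝ) 1, 0 ≤ u x) :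
    lam * K ≤ 720 * r := by
  have h01 : (0:ℝ) < 1 := one_pos
  have hUD : UniqueDiffOn ℝ (Set.Icc (0:ℝ) 1) := uniqueDiffOn_Icc h01
  set I : Set ℝ := Set.Icc (0:ℝ) 1 with hI
  set v : ℕ → ℝ → ℝ := fun i => iteratedDerivWithin i u I with hv
  have hvc : ∀ i : ℕ, (i:ℕ) ≤ 4 → ContinuousOn (v i) I := fun i hi =>
    hu.continuousOn_iteratedDerivWithin (by exact_mod_cast hi) hUD
  have hder : ∀ i : ℕ, i < 4 → ∀ x ∈ Set.Ioo (0:ℝ) 1, HasDerivAt (v i) (v (i+1) x) x := by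
    intro i hi x hx
    have hxI : x ∈ I := Set.Ioo_subset_Icc_self hx
    have hdiff : DifferentiableOn ℝ (v i) I :=
      hu.differentiableOn_iteratedDerivWithin (by exact_mod_cast hi) hUD
    have h2 : HasDerivWithinAt (v i) (derivWithin (v i) I x) I x :=
      (hdiff x hxI).hasDerivWithinAt
    have h3 : derivWithin (v i) I x = v (i+1) x := by
      rw [hv]; exact (congrFun (iteratedDerivWithin_succ (𝕜 := ℝ) (f := u)) x).symm
    rw [h3] at h2
    exact h2.hasDerivAt (Icc_mem_nhds hx.1 hx.2)
  have hv0 : v 0 = u := by funext x; simp [hv]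
  have h0I : (0:ℝ) ∈ I := by simp [hI]
  have h1I : (1:ℝ) ∈ I := by simp [hI]
  have hv1_0 : v 1 0 = 0 := by
    show iteratedDerivWithin 1 u I 0 = 0
    rw [iteratedDerivWithin_one]; exact hd0
  have hv1_1 : v 1 1 = 0 := by
    show iteratedDerivWithin 1 u I 1 = 0
    rw [iteratedDerivWithin_one]; exact hd1
  -- F and FTC
  set F : ℝ → ℝ := fun x => v 3 x * phi0 x - v 2 x * phi1 x + v 1 x * phi2 x - u x * phi3 x
    with hF
  have hFcont : ContinuousOn F I := by
    refine ((((hvc 3 (by norm_num)).mul cont_phi0.continuousOn).sub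
      ((hvc 2 (by norm_num)).mul cont_phi1.continuousOn)).add
      ((hvc 1 (by norm_num)).mul cont_phi2.continuousOn)).sub
      (hu.continuousOn.mul cont_phi3.continuousOn)
  have hFderiv : ∀ x ∈ Set.Ioo (0:ℝ) 1, HasDerivAt F (v 4 x * phi0 x - 24 * u x) x := by
    intro x hx
    have h3 := (hder 3 (by norm_num) x hx).mul (hasDerivAt_phi0 x)
    have h2 := (hder 2 (by norm_num) x hx).mul (hasDerivAt_phi1 x)
    have h1' := (hder 1 (by norm_num) x hx).mul (hasDerivAt_phi2 x)
    have h0' := (hder 0 (by norm_num) x hx).mul (hasDerivAt_phi3 x)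
    rw [hv0] at h0'
    have := ((h3.sub h2).add h1').sub h0'
    convert this using 1
    · rfl
    · rfl
    · rfl
    ring
  have hint : IntervalIntegrable (fun x => v 4 x * phi0 x - 24 * u x) MeasureTheory.volume 0 1 := by
    apply ContinuousOn.intervalIntegrable
    rw [Set.uIcc_of_le h01.le]
    exact ((hvc 4 le_rfl).mul cont_phi0.continuousOn).sub
      (hu.continuousOn.const_smul (24:ℝ) |>.congr (fun x _ => by simp [smul_eq_mul]))
  have hFTC : ∫ x in (0:ℝ)..1, (v 4 x * phi0 x - 24 * u x) = F 1 - F 0 :=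
    intervalIntegral.integral_eq_sub_of_hasDeriv_right_of_le h01.le hFcont
      (fun x hx => (hFderiv x hx).hasDerivWithinAt) hint
  have hF0 : F 0 = 0 := by
    simp only [hF, hv1_0, h0]
    norm_num [phi0, phi1]
  have hF1 : F 1 = 0 := by
    simp only [hF, hv1_1, h1]
    norm_num [phi0, phi1]
  rw [hF1, hF0, sub_zero] at hFTC
  -- integrability of pieces
  have hint1 : IntervalIntegrable (fun x => v 4 x * phi0 x) MeasureTheory.volume 0 1 := by
    apply ContinuousOn.intervalIntegrable
    rw [Set.uIcc_of_le h01.le]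
    exact (hvc 4 le_rfl).mul cont_phi0.continuousOn
  have hint2 : IntervalIntegrable (fun x => 24 * u x) MeasureTheory.volume 0 1 := by
    apply ContinuousOn.intervalIntegrable
    rw [Set.uIcc_of_le h01.le]
    exact continuousOn_const.mul hu.continuousOn
  have hsplit : ∫ x in (0:ℝ)..1, v 4 x * phi0 x = ∫ x in (0:ℝ)..1, 24 * u x := by
    have := intervalIntegral.integral_sub hint1 hint2
    rw [hFTC] at this
    linarith [this]
  -- upper bound: ∫ 24 u ≤ 24 r
  have hub : ∫ x in (0:ℝ)..1, 24 * u x ≤ 24 * r := by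
    have : ∫ x in (0:ℝ)..1, (24 * r : ℝ) = 24 * r := by simp
    rw [← this]
    apply intervalIntegral.integral_mono_on h01.le hint2 intervalIntegrable_const
    intro x hx
    have := hur x hx
    linarith
  -- lower bound: lam * K * phi0 ≤ v4 * phi0 on Icc
  have hlb : lam * K * (1/30) ≤ ∫ x in (0:ℝ)..1, v 4 x * phi0 x := by
    have hmono : ∀ x ∈ I, lam * K * phi0 x ≤ v 4 x * phi0 x := by
      intro x hx
      rcases eq_or_lt_of_le hx.1 with h | hx0
      · simp [← h, phi0]
      rcases eq_or_lt_of_le hx.2 with h | hx1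
      · norm_num [h, phi0]
      have hxo : x ∈ Set.Ioo (0:ℝ) 1 := ⟨hx0, hx1⟩
      have huxr : u x ∈ Set.Ico (0:ℝ) r := ⟨hnn x hxo, hur x hx⟩
      have : lam * K ≤ v 4 x := by
        show lam * K ≤ iteratedDerivWithin 4 u I x
        rw [heq x hxo]
        exact mul_le_mul_of_nonneg_left (hKf _ huxr) hlam.le
      exact mul_le_mul_of_nonneg_right this (phi0_nonneg x)
    have := intervalIntegral.integral_mono_on h01.le
      ((cont_phi0.intervalIntegrable 0 1).const_mul (lam * K)) hint1 hmono
    calc lam * K * (1/30) = ∫ x in (0:ℝ)..1, lam * K * phi0 x := by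
          rw [intervalIntegral.integral_const_mul, integral_phi0]
      _ ≤ _ := this
  rw [hsplit] at hlb
  nlinarith [hlb, hub]


lemma unif_lower (f : ℝ → ℝ) (r : ℝ) (hr : 0 < r)
    (hf : ContinuousOn f (Set.Ico 0 r))
    (hfpos : ∀ s ∈ Set.Ico (0:ℝ) r, 0 < f s)
    (hlim : ∃ a > (0:ℝ), ∀ᶠ s in nhdsWithin r (Set.Iio r), a ≤ (r - s) * f s) :
    ∃ K > 0, ∀ s ∈ Set.Ico (0:ℝ) r, K ≤ f s := by
  obtain ⟨a, ha, hev⟩ := hlim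
  rw [eventually_nhdsWithin_iff, Metric.eventually_nhds_iff] at hev
  obtain ⟨ε, hε, hball⟩ := hev
  set s₀ : ℝ := max 0 (r - ε/2) with hs₀
  have hs₀r : s₀ < r := max_lt hr (by linarith)
  have hsub : Set.Icc (0:ℝ) s₀ ⊆ Set.Ico 0 r := fun x hx => ⟨hx.1, lt_of_le_of_lt hx.2 hs₀r⟩
  obtain ⟨m, hm, hmin⟩ := isCompact_Icc.exists_isMinOn ⟨0, le_refl 0, le_max_left _ _⟩
    (hf.mono hsub)
  refine ⟨min (f m) (a / r), lt_min (hfpos m (hsub hm)) (div_pos ha hr), fun s hs => ?_⟩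
  rcases le_or_gt s s₀ with h | h
  · exact le_trans (min_le_left _ _) (hmin ⟨hs.1, h⟩)
  · refine le_trans (min_le_right _ _) ?_
    have hsr : s < r := hs.2
    have hd : dist s r < ε := by
      rw [Real.dist_eq, abs_of_nonpos (by linarith)]
      have : r - ε/2 ≤ s₀ := le_max_right _ _
      linarith
    have key : a ≤ (r - s) * f s := hball hd hsr
    have hfs : 0 < f s := hfpos s hs
    rw [div_le_iff₀ hr]
    calc a ≤ (r - s) * f s := key
    _ ≤ r * f s := by nlinarith [hs.1]
    _ = f s * r := mul_comm _ _

/-- Nonexistence of positive solutions for large `lam`: the set of `lam > 0` admitting a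
positive solution with values in `[0, r)` is bounded above. -/
theorem no_solution_for_large_lambda
    (f : ℝ → ℝ) (r : ℝ) (hr : 0 < r)
    (hf : ContinuousOn f (Set.Ico 0 r))
    (hfpos : ∀ s ∈ Set.Ico (0:ℝ) r, 0 < f s)
    (hlim : ∃ a > (0:ℝ), ∀ᶠ s in nhdsWithin r (Set.Iio r), a ≤ (r - s) * f s) :
    (∃ lam₀ : ℝ, 0 < lam₀ ∧
      ∀ lam : ℝ, lam₀ < lam → ¬ ∃ u : ℝ → ℝ, IsPosSol f r lam u) ∧
    BddAbove {lam : ℝ | 0 < lam ∧ ∃ u : ℝ → ℝ, IsPosSol f r lam u} := by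
  obtain ⟨K, hK, hKf⟩ := unif_lower f r hr hf hfpos hlim
  have key : ∀ lam : ℝ, 0 < lam → (∃ u : ℝ → ℝ, IsPosSol f r lam u) → lam ≤ 720 * r / K := by
    intro lam hlam ⟨u, hu, hur, heq, h0, h1, hd0, hd1, hnn, _⟩
    have := key_bound f r lam K hr hK hKf hlam u hu hur heq h0 h1 hd0 hd1 hnn
    rw [le_div_iff₀ hK]
    linarith
  have hpos : 0 < 720 * r / K := by positivity
  refine ⟨⟨720 * r / K, hpos, fun lam hl hsol => ?_⟩, ⟨720 * r / K, fun lam hmem => ?_⟩⟩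
  · exact absurd (key lam (hpos.trans hl) hsol) (not_le.mpr hl)
  · exact key lam hmem.1 hmem.2
end

section
/- Let (λ_n) be positive numbers with λ_n → 0 and let u_n be a positive solution of (P_{λ_n}) with u_n(x) < r on [0,1] for each n. Suppose u_n, u_n', u_n'' converge uniformly on [0,1] to w, w', w'' for some twice continuously differentiable function w on [0,1], and suppose max_{x∈[0,1]} w(x) < r. Then w is identically 0 on [0,1]. -/
open Set Filter

section Aux

open Topology

lemma myHDA {v : ℝ → ℝ} {N : WithTop ℕ∞} (hv : ContDiffOn ℝ N v (Icc 0 1))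
    {k : ℕ} (hk : (k : WithTop ℕ∞) < N) {x : ℝ} (hx : x ∈ Ioo (0:ℝ) 1) :
    HasDerivAt (iteratedDerivWithin k v (Icc 0 1))
      (iteratedDerivWithin (k+1) v (Icc 0 1) x) x := by
  have hI : UniqueDiffOn ℝ (Icc (0:ℝ) 1) := uniqueDiffOn_Icc one_pos
  have hxI : x ∈ Icc (0:ℝ) 1 := Ioo_subset_Icc_self hx
  have hd := hv.differentiableOn_iteratedDerivWithin hk hI x hxI
  have h1 : HasDerivWithinAt (iteratedDerivWithin k v (Icc 0 1))
      (iteratedDerivWithin (k+1) v (Icc 0 1) x) (Icc 0 1) x := by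
    rw [iteratedDerivWithin_succ]
    exact hd.hasDerivWithinAt
  exact h1.hasDerivAt (Icc_mem_nhds hx.1 hx.2)

lemma myConst {g : ℝ → ℝ} (hg : ∀ x ∈ Ioo (0:ℝ) 1, HasDerivAt g 0 x)
    {x y : ℝ} (hx : x ∈ Ioo (0:ℝ) 1) (hy : y ∈ Ioo (0:ℝ) 1) : g x = g y := by
  have h := Convex.norm_image_sub_le_of_norm_hasDerivWithin_le (f' := fun _ => (0:ℝ)) (C := 0)
    (fun z hz => (hg z hz).hasDerivWithinAt) (fun z hz => by simp) (convex_Ioo 0 1) hy hx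
  have h0 : ‖g x - g y‖ ≤ 0 := by simpa using h
  exact sub_eq_zero.mp (norm_le_zero_iff.mp h0)

lemma myPoly (a b c : ℝ) (y : ℝ) :
    HasDerivAt (fun t : ℝ => a*t^3/6 + b*t^2/2 + c*t) (a*y^2/2 + b*y + c) y := by
  have h := ((HasDerivAt.const_mul (a/6) (hasDerivAt_pow 3 y)).add
      (HasDerivAt.const_mul (b/2) (hasDerivAt_pow 2 y))).add
      (HasDerivAt.const_mul c (hasDerivAt_id' (x := y)))
  have hfun : (fun t : ℝ => a*t^3/6 + b*t^2/2 + c*t)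
      = fun t : ℝ => a/6*t^3 + b/2*t^2 + c*t := by funext t; ring
  rw [hfun]
  exact h.congr_deriv (by rw [show (3:ℕ)-1 = 2 from rfl, show (2:ℕ)-1 = 1 from rfl]; push_cast; ring)

lemma myPoly2 (a b : ℝ) (y : ℝ) :
    HasDerivAt (fun t : ℝ => a*t^2/2 + b*t) (a*y + b) y := by
  have h := (HasDerivAt.const_mul (a/2) (hasDerivAt_pow 2 y)).add
      (HasDerivAt.const_mul b (hasDerivAt_id' (x := y)))
  have hfun : (fun t : ℝ => a*t^2/2 + b*t) = fun t : ℝ => a/2*t^2 + b*t := by funext t; ring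
  rw [hfun]
  exact h.congr_deriv (by rw [show (2:ℕ)-1 = 1 from rfl]; push_cast; ring)

lemma myBdry {g p : ℝ → ℝ} (hg : ContinuousOn g (Icc 0 1)) (hp : Continuous p)
    (heq : ∀ x ∈ Ioo (0:ℝ) 1, g x = p x) {x : ℝ} (hx : x ∈ Icc (0:ℝ) 1) : g x = p x := by
  have hne : (𝓝[Ioo (0:ℝ) 1] x).NeBot := by
    apply mem_closure_iff_nhdsWithin_neBot.mp
    rw [closure_Ioo one_ne_zero.symm]; exact hx
  have h1 : Tendsto g (𝓝[Ioo (0:ℝ) 1] x) (𝓝 (g x)) :=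
    ((hg x hx).mono Ioo_subset_Icc_self).tendsto
  have h2 : Tendsto g (𝓝[Ioo (0:ℝ) 1] x) (𝓝 (p x)) := by
    refine (hp.continuousAt.continuousWithinAt.tendsto).congr' ?_
    exact (eventually_mem_nhdsWithin.mono fun y hy => (heq y hy).symm)
  exact tendsto_nhds_unique h1 h2

end Aux

/-- If `lam_n → 0`, the solutions `u_n` converge in `C²[0,1]` to `w`, and
`max w < r`, then `w ≡ 0`. -/
theorem limit_below_singularity_is_zero
    (f : ℝ → ℝ) (r : ℝ) (hr : 0 < r)
    (hf : ContDiffOn ℝ 1 f (Set.Ico 0 r))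
    (hfpos : ∀ s ∈ Set.Ico (0:ℝ) r, 0 < f s)
    (hf' : ∀ s ∈ Set.Ioo (0:ℝ) r, 0 < derivWithin f (Set.Ico 0 r) s)
    (hlim : ∃ a > (0:ℝ), ∀ᶠ s in nhdsWithin r (Set.Iio r), a ≤ (r - s) * f s)
    (lam : ℕ → ℝ) (hlampos : ∀ n, 0 < lam n)
    (hlam0 : Tendsto lam atTop (nhds 0))
    (u : ℕ → ℝ → ℝ) (hu : ∀ n, IsPosSol f r (lam n) (u n))
    (w : ℝ → ℝ) (hw : ContDiffOn ℝ 2 w (Set.Icc 0 1))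
    (hconv : ∀ k : ℕ, k ≤ 2 →
      TendstoUniformlyOn (fun n x => iteratedDerivWithin k (u n) (Set.Icc 0 1) x)
        (iteratedDerivWithin k w (Set.Icc 0 1)) atTop (Set.Icc 0 1))
    (hmax : ∀ x ∈ Set.Icc (0:ℝ) 1, w x < r) :
    ∀ x ∈ Set.Icc (0:ℝ) 1, w x = 0 := by
  clear hf' hlim
  have h01 : (0:ℝ) ∈ Icc (0:ℝ) 1 := by norm_num
  have h11 : (1:ℝ) ∈ Icc (0:ℝ) 1 := by norm_num
  have hhalf : (1/2:ℝ) ∈ Ioo (0:ℝ) 1 := by norm_num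
  have hI : UniqueDiffOn ℝ (Icc (0:ℝ) 1) := uniqueDiffOn_Icc one_pos
  have hpt : ∀ k : ℕ, k ≤ 2 → ∀ x ∈ Icc (0:ℝ) 1,
      Tendsto (fun n => iteratedDerivWithin k (u n) (Icc 0 1) x) atTop
        (nhds (iteratedDerivWithin k w (Icc 0 1) x)) :=
    fun k hk x hx => (hconv k hk).tendsto_at hx
  -- boundary values of w and its first derivative
  have hw0 : w 0 = 0 := by
    have h := hpt 0 (by norm_num) 0 h01
    simp only [iteratedDerivWithin_zero] at h
    exact tendsto_nhds_unique (h.congr fun n => (hu n).2.2.2.1) tendsto_const_nhds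
  have hw1 : w 1 = 0 := by
    have h := hpt 0 (by norm_num) 1 h11
    simp only [iteratedDerivWithin_zero] at h
    exact tendsto_nhds_unique (h.congr fun n => (hu n).2.2.2.2.1) tendsto_const_nhds
  have hW1_0 : iteratedDerivWithin 1 w (Icc (0:ℝ) 1) 0 = 0 := by
    have h := hpt 1 (by norm_num) 0 h01
    refine tendsto_nhds_unique (h.congr fun n => ?_) tendsto_const_nhds
    rw [iteratedDerivWithin_one]; exact (hu n).2.2.2.2.2.1
  have hW1_1 : iteratedDerivWithin 1 w (Icc (0:ℝ) 1) 1 = 0 := by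
    have h := hpt 1 (by norm_num) 1 h11
    refine tendsto_nhds_unique (h.congr fun n => ?_) tendsto_const_nhds
    rw [iteratedDerivWithin_one]; exact (hu n).2.2.2.2.2.2.1
  -- nonnegativity on the closed interval
  have hge : ∀ n, ∀ x ∈ Icc (0:ℝ) 1, 0 ≤ u n x := by
    intro n x hx
    rcases eq_or_lt_of_le hx.1 with h | h
    · rw [← h, (hu n).2.2.2.1]
    rcases eq_or_lt_of_le hx.2 with h2 | h2
    · rw [h2, (hu n).2.2.2.2.1]
    · exact (hu n).2.2.2.2.2.2.2.1 x ⟨h, h2⟩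
  -- a uniform bound `M < r` for the `u n`, eventually
  obtain ⟨x0, hx0I, hx0⟩ := isCompact_Icc.exists_isMaxOn (nonempty_Icc.mpr zero_le_one)
    hw.continuousOn
  have hM0r : w x0 < r := hmax x0 hx0I
  set ε := (r - w x0) / 2 with hεdef
  have hεpos : 0 < ε := by rw [hεdef]; linarith
  set M := max (w x0 + ε) 0 with hMdef
  have hMr : M < r := by
    apply max_lt _ hr
    rw [hεdef]; linarith
  have hMnn : (0:ℝ) ≤ M := le_max_right _ _
  have hevM : ∀ᶠ n in atTop, ∀ x ∈ Icc (0:ℝ) 1, u n x ≤ M := by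
    have h := (Metric.tendstoUniformlyOn_iff.mp (hconv 0 (by norm_num))) ε hεpos
    filter_upwards [h] with n hn x hx
    have h2 := hn x hx
    simp only [iteratedDerivWithin_zero, Real.dist_eq] at h2
    have h3 : w x ≤ w x0 := hx0 hx
    have h4 : u n x < w x + ε := by
      rcases abs_lt.mp h2 with ⟨hl, hr'⟩; linarith
    exact le_trans (by linarith) (le_max_left _ _)
  -- a uniform bound on `f ∘ u n`
  have hMIco : Icc (0:ℝ) M ⊆ Ico 0 r := fun s hs => ⟨hs.1, lt_of_le_of_lt hs.2 hMr⟩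
  obtain ⟨s1, hs1, hs1max⟩ := isCompact_Icc.exists_isMaxOn (nonempty_Icc.mpr hMnn)
    (hf.continuousOn.mono hMIco)
  set K := f s1 with hKdef
  have hKnn : 0 ≤ K := (hfpos s1 (hMIco hs1)).le
  -- bound on the 4-th derivative
  have hD4 : ∀ᶠ n in atTop, ∀ x ∈ Ioo (0:ℝ) 1,
      ‖iteratedDerivWithin 4 (u n) (Icc 0 1) x‖ ≤ lam n * K := by
    filter_upwards [hevM] with n hn x hx
    have hxI := Ioo_subset_Icc_self hx
    rw [(hu n).2.2.1 x hx]
    have hu0 : (0:ℝ) ≤ u n x := hge n x hxI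
    have hur : u n x ∈ Ico (0:ℝ) r := ⟨hu0, (hu n).2.1 x hxI⟩
    have hfb : f (u n x) ≤ K := hs1max ⟨hu0, hn x hxI⟩
    have hfp : 0 < f (u n x) := hfpos _ hur
    rw [Real.norm_eq_abs, abs_of_pos (mul_pos (hlampos n) hfp)]
    exact mul_le_mul_of_nonneg_left hfb (hlampos n).le
  -- the third derivatives converge uniformly on `Ioo 0 1` to the constant `c`
  set W2 := iteratedDerivWithin 2 w (Icc (0:ℝ) 1) with hW2def
  set c := W2 1 - W2 0 with hcdef
  have hcn : Tendsto (fun n => iteratedDerivWithin 2 (u n) (Icc (0:ℝ) 1) 1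
      - iteratedDerivWithin 2 (u n) (Icc (0:ℝ) 1) 0) atTop (nhds c) :=
    (hpt 2 le_rfl 1 h11).sub (hpt 2 le_rfl 0 h01)
  have hD3 : TendstoUniformlyOn (fun n x => iteratedDerivWithin 3 (u n) (Icc 0 1) x)
      (fun _ => c) atTop (Ioo (0:ℝ) 1) := by
    rw [Metric.tendstoUniformlyOn_iff]
    intro δ hδ
    have h1 := Metric.tendsto_nhds.mp hcn (δ/2) (by linarith)
    have hKlim : Tendsto (fun n => lam n * K) atTop (nhds 0) := by
      simpa using hlam0.mul_const K
    have h2 : ∀ᶠ n in atTop, lam n * K < δ/2 := by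
      have h := Metric.tendsto_nhds.mp hKlim (δ/2) (by linarith)
      filter_upwards [h] with n hn
      rw [Real.dist_eq] at hn
      calc lam n * K ≤ |lam n * K - 0| := by rw [sub_zero]; exact le_abs_self _
        _ < δ/2 := hn
    filter_upwards [h1, h2, hD4] with n hn1 hn2 hn4 x hx
    set g := iteratedDerivWithin 2 (u n) (Icc (0:ℝ) 1) with hgdef
    have hgc : ContinuousOn g (Icc 0 1) :=
      (hu n).1.continuousOn_iteratedDerivWithin (by norm_num) hI
    have hg' : ∀ y ∈ Ioo (0:ℝ) 1, HasDerivAt g (iteratedDerivWithin 3 (u n) (Icc 0 1) y) y :=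
      fun y hy => myHDA (hu n).1 (by norm_num) hy
    obtain ⟨ξ, hξ, hslope⟩ := exists_hasDerivAt_eq_slope g _ one_pos hgc hg'
    have hsl : iteratedDerivWithin 3 (u n) (Icc (0:ℝ) 1) ξ = g 1 - g 0 := by
      rw [hslope]; norm_num
    have hlip : |iteratedDerivWithin 3 (u n) (Icc 0 1) x
        - iteratedDerivWithin 3 (u n) (Icc 0 1) ξ| ≤ lam n * K := by
      have hb := Convex.norm_image_sub_le_of_norm_hasDerivWithin_le
        (f' := fun y => iteratedDerivWithin 4 (u n) (Icc 0 1) y) (C := lam n * K)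
        (fun y hy => (myHDA (hu n).1 (by norm_num) hy).hasDerivWithinAt)
        (fun y hy => hn4 y hy) (convex_Ioo 0 1) hξ hx
    -- hb : ‖D3 x - D3 ξ‖ ≤ lam n * K * ‖x - ξ‖
      have hzξ : ‖x - ξ‖ ≤ 1 := by
        rw [Real.norm_eq_abs, abs_le]
        constructor <;> [linarith [hx.1, hξ.2]; linarith [hx.2, hξ.1]]
      have hKnn' : 0 ≤ lam n * K := mul_nonneg (hlampos n).le hKnn
      calc |iteratedDerivWithin 3 (u n) (Icc 0 1) x - iteratedDerivWithin 3 (u n) (Icc 0 1) ξ|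
          ≤ lam n * K * ‖x - ξ‖ := by rw [← Real.norm_eq_abs]; exact hb
        _ ≤ lam n * K * 1 := by exact mul_le_mul_of_nonneg_left hzξ hKnn'
        _ = lam n * K := mul_one _
    rw [Real.dist_eq]
    rw [hsl] at hlip
    have habs := abs_sub_le c (g 1 - g 0) (iteratedDerivWithin 3 (u n) (Icc 0 1) x)
    have h5 : |c - (g 1 - g 0)| < δ/2 := by
      rw [abs_sub_comm, ← Real.dist_eq]; exact hn1
    have h6 : |(g 1 - g 0) - iteratedDerivWithin 3 (u n) (Icc 0 1) x| ≤ lam n * K := by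
      rw [abs_sub_comm]; exact hlip
    calc |c - iteratedDerivWithin 3 (u n) (Icc 0 1) x|
        ≤ |c - (g 1 - g 0)| + |(g 1 - g 0) - iteratedDerivWithin 3 (u n) (Icc 0 1) x| := habs
      _ < δ/2 + δ/2 := add_lt_add_of_lt_of_le h5 (h6.trans hn2.le)
      _ = δ := by ring
  -- derivative of W2 via uniform limits of derivatives
  have hW2' : ∀ x ∈ Ioo (0:ℝ) 1, HasDerivAt W2 c x := by
    intro x hx
    exact hasDerivAt_of_tendstoUniformlyOn isOpen_Ioo hD3
      (Filter.Eventually.of_forall fun n y hy => myHDA (hu n).1 (by norm_num) hy)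
      (fun y hy => hpt 2 le_rfl y (Ioo_subset_Icc_self hy)) hx
  set W1 := iteratedDerivWithin 1 w (Icc (0:ℝ) 1) with hW1def
  have hwd : ∀ x ∈ Ioo (0:ℝ) 1, HasDerivAt w (W1 x) x := by
    intro x hx
    have h := myHDA (k := 0) hw (by norm_num) hx
    rwa [iteratedDerivWithin_zero] at h
  have hW1d : ∀ x ∈ Ioo (0:ℝ) 1, HasDerivAt W1 (W2 x) x :=
    fun x hx => myHDA (k := 1) hw (by norm_num) hx
  set d2 := W2 (1/2) - c * (1/2) with hd2def
  have hW2eq : ∀ x ∈ Ioo (0:ℝ) 1, W2 x = c * x + d2 := by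
    intro x hx
    have hcon : ∀ z ∈ Ioo (0:ℝ) 1, HasDerivAt (fun y => W2 y - c * y) 0 z := by
      intro z hz
      have h := (hW2' z hz).sub (HasDerivAt.const_mul c (hasDerivAt_id' (x := z)))
      simp at h; exact h
    have h : W2 x - c * x = W2 (1/2) - c * (1/2) := myConst hcon hx hhalf
    rw [hd2def]; linarith
  set e := W1 (1/2) - (c * (1/2)^2/2 + d2 * (1/2)) with hedef
  have hW1eq : ∀ x ∈ Ioo (0:ℝ) 1, W1 x = c * x^2/2 + d2 * x + e := by
    intro x hx
    have hcon : ∀ z ∈ Ioo (0:ℝ) 1, HasDerivAt (fun y => W1 y - (c*y^2/2 + d2*y)) 0 z := by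
      intro z hz
      have h1 := hW1d z hz
      rw [hW2eq z hz] at h1
      have h := h1.sub (myPoly2 c d2 z)
      simp at h; exact h
    have h : W1 x - (c*x^2/2 + d2*x) = W1 (1/2) - (c*(1/2)^2/2 + d2*(1/2)) :=
      myConst hcon hx hhalf
    rw [hedef]; linarith
  set k0 := w (1/2) - (c*(1/2)^3/6 + d2*(1/2)^2/2 + e*(1/2)) with hk0def
  have hweq : ∀ x ∈ Ioo (0:ℝ) 1, w x = c*x^3/6 + d2*x^2/2 + e*x + k0 := by
    intro x hx
    have hcon : ∀ z ∈ Ioo (0:ℝ) 1,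
        HasDerivAt (fun y => w y - (c*y^3/6 + d2*y^2/2 + e*y)) 0 z := by
      intro z hz
      have h1 := hwd z hz
      rw [hW1eq z hz] at h1
      have h := h1.sub (myPoly c d2 e z)
      simp at h; exact h
    have h : w x - (c*x^3/6 + d2*x^2/2 + e*x)
        = w (1/2) - (c*(1/2)^3/6 + d2*(1/2)^2/2 + e*(1/2)) := myConst hcon hx hhalf
    rw [hk0def]; linarith
  -- extend to the closed interval by continuity
  have hwIcc : ∀ x ∈ Icc (0:ℝ) 1, w x = c*x^3/6 + d2*x^2/2 + e*x + k0 :=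
    fun x hx => myBdry hw.continuousOn (by fun_prop) hweq hx
  have hW1cont : ContinuousOn W1 (Icc (0:ℝ) 1) :=
    hw.continuousOn_iteratedDerivWithin (by norm_num) hI
  have hW1Icc : ∀ x ∈ Icc (0:ℝ) 1, W1 x = c*x^2/2 + d2*x + e :=
    fun x hx => myBdry hW1cont (by fun_prop) hW1eq hx
  -- the four boundary conditions force the cubic to vanish
  have eq1 : k0 = 0 := by
    have h := hwIcc 0 h01; rw [hw0] at h; norm_num at h; linarith
  have eq2 : c/6 + d2/2 + e + k0 = 0 := by
    have h := hwIcc 1 h11; rw [hw1] at h; norm_num at h; linarith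
  have eq3 : e = 0 := by
    have h := hW1Icc 0 h01; rw [hW1_0] at h; norm_num at h; linarith
  have eq4 : c/2 + d2 + e = 0 := by
    have h := hW1Icc 1 h11; rw [hW1_1] at h; norm_num at h; linarith
  have hc0 : c = 0 := by linear_combination (-12)*eq2 + 6*eq4 + 6*eq3 + 12*eq1
  have hd0 : d2 = 0 := by linear_combination eq4 - eq3 - hc0/2
  intro x hx
  rw [hwIcc x hx, hc0, hd0, eq3, eq1]; ring
end

section
/- Let λ > 0 and let u be a positive solution of (P_λ) with u(x) < r on [0,1]. Then u''(0) > 0 and u''(1) > 0. -/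
open Set Filter

/-- For any positive solution, `u''(0) > 0` and `u''(1) > 0`. -/
theorem second_derivative_positive_at_endpoints
    (f : ℝ → ℝ) (r : ℝ) (hr : 0 < r)
    (hf : ContDiffOn ℝ 1 f (Set.Ico 0 r))
    (hfpos : ∀ s ∈ Set.Ico (0:ℝ) r, 0 < f s)
    (hf' : ∀ s ∈ Set.Ioo (0:ℝ) r, 0 < derivWithin f (Set.Ico 0 r) s)
    (lam : ℝ) (hlam : 0 < lam)
    (u : ℝ → ℝ) (hu : IsPosSol f r lam u) :
    0 < iteratedDerivWithin 2 u (Set.Icc 0 1) 0 ∧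
    0 < iteratedDerivWithin 2 u (Set.Icc 0 1) 1 := by
  obtain ⟨hC, hlt, heq, hu0, hu1, hd0, hd1, hnn, x₁, hx₁, hx₁ne⟩ := hu
  have hud : UniqueDiffOn ℝ (Set.Icc (0:ℝ) 1) := uniqueDiffOn_Icc one_pos
  have hm0 : (0:ℝ) ∈ Set.Icc (0:ℝ) 1 := ⟨le_refl 0, zero_le_one⟩
  have hm1 : (1:ℝ) ∈ Set.Icc (0:ℝ) 1 := ⟨zero_le_one, le_refl 1⟩
  have hdiff : ∀ k : ℕ, k < 4 →
      DifferentiableOn ℝ (iteratedDerivWithin k u (Set.Icc 0 1)) (Set.Icc 0 1) := fun k hk =>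
    hC.differentiableOn_iteratedDerivWithin (by exact_mod_cast hk) hud
  have hcont : ∀ k : ℕ, k ≤ 4 →
      ContinuousOn (iteratedDerivWithin k u (Set.Icc 0 1)) (Set.Icc 0 1) := fun k hk =>
    hC.continuousOn_iteratedDerivWithin (by exact_mod_cast hk) hud
  have hderiv : ∀ (k : ℕ), ∀ x ∈ Set.Ioo (0:ℝ) 1,
      deriv (iteratedDerivWithin k u (Set.Icc 0 1)) x
        = iteratedDerivWithin (k+1) u (Set.Icc 0 1) x := by
    intro k x hx
    rw [← derivWithin_of_mem_nhds (Icc_mem_nhds hx.1 hx.2),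
      ← iteratedDerivWithin_succ]
  -- `u'` expressed through the iterated derivative
  have hD1eq : ∀ x ∈ Set.Ioo (0:ℝ) 1,
      deriv u x = iteratedDerivWithin 1 u (Set.Icc 0 1) x := by
    intro x hx
    rw [← derivWithin_of_mem_nhds (Icc_mem_nhds hx.1 hx.2),
      iteratedDerivWithin_one]
  have hD10 : iteratedDerivWithin 1 u (Set.Icc 0 1) 0 = 0 := by
    rw [iteratedDerivWithin_one]; exact hd0
  have hD11 : iteratedDerivWithin 1 u (Set.Icc 0 1) 1 = 0 := by
    rw [iteratedDerivWithin_one]; exact hd1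
  -- positivity of the 4th derivative
  have h4pos : ∀ x ∈ Set.Ioo (0:ℝ) 1, 0 < iteratedDerivWithin 4 u (Set.Icc 0 1) x := by
    intro x hx
    rw [heq x hx]
    exact mul_pos hlam (hfpos _ ⟨hnn x hx, hlt x (Ioo_subset_Icc_self hx)⟩)
  -- `u'''` is strictly monotone, hence `u''` is convex
  have h3mono : StrictMonoOn (iteratedDerivWithin 3 u (Set.Icc 0 1)) (Set.Icc 0 1) := by
    apply strictMonoOn_of_deriv_pos (convex_Icc 0 1) (hcont 3 (by norm_num))
    intro x hx
    rw [interior_Icc] at hx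
    rw [hderiv 3 x hx]
    exact h4pos x hx
  have h2conv : ConvexOn ℝ (Set.Icc 0 1) (iteratedDerivWithin 2 u (Set.Icc 0 1)) := by
    apply MonotoneOn.convexOn_of_deriv (convex_Icc 0 1) (hcont 2 (by norm_num))
      ((hdiff 2 (by norm_num)).mono interior_subset)
    intro x hx y hy hxy
    rw [interior_Icc] at hx hy
    rw [hderiv 2 x hx, hderiv 2 y hy]
    exact h3mono.monotoneOn (Ioo_subset_Icc_self hx) (Ioo_subset_Icc_self hy) hxy
  -- `u''` must be negative somewhere in `(0,1)`
  have hexneg : ∃ x₀ ∈ Set.Ioo (0:ℝ) 1, iteratedDerivWithin 2 u (Set.Icc 0 1) x₀ < 0 := by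
    by_contra hcon
    push_neg at hcon
    have h1mono : MonotoneOn (iteratedDerivWithin 1 u (Set.Icc 0 1)) (Set.Icc 0 1) := by
      apply monotoneOn_of_deriv_nonneg (convex_Icc 0 1) (hcont 1 (by norm_num))
        ((hdiff 1 (by norm_num)).mono interior_subset)
      intro x hx
      rw [interior_Icc] at hx
      rw [hderiv 1 x hx]
      exact hcon x hx
    have hD1zero : ∀ x ∈ Set.Icc (0:ℝ) 1, iteratedDerivWithin 1 u (Set.Icc 0 1) x = 0 := by
      intro x hx
      have h1 := h1mono hx hm1 hx.2
      have h2 := h1mono hm0 hx hx.1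
      rw [hD11] at h1
      rw [hD10] at h2
      linarith
    have humono : MonotoneOn u (Set.Icc 0 1) := by
      apply monotoneOn_of_deriv_nonneg (convex_Icc 0 1) hC.continuousOn
        ((hC.differentiableOn (by norm_num)).mono interior_subset)
      intro x hx
      rw [interior_Icc] at hx
      rw [hD1eq x hx, hD1zero x (Ioo_subset_Icc_self hx)]
    have : u x₁ = 0 := le_antisymm
      (hu1 ▸ humono (Ioo_subset_Icc_self hx₁) hm1 hx₁.2.le) (hnn x₁ hx₁)
    exact hx₁ne this
  obtain ⟨x₀, hx₀, hx₀neg⟩ := hexneg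
  have hx₀I : x₀ ∈ Set.Icc (0:ℝ) 1 := Ioo_subset_Icc_self hx₀
  constructor
  · -- u''(0) > 0
    by_contra hcon
    push_neg at hcon
    -- u'' < 0 on (0, x₀]
    have hneg : ∀ x ∈ Set.Ioo (0:ℝ) x₀, iteratedDerivWithin 2 u (Set.Icc 0 1) x < 0 := by
      intro x hx
      have hb : 0 < x / x₀ := div_pos hx.1 hx₀.1
      have ha : 0 ≤ (x₀ - x) / x₀ := div_nonneg (by linarith [hx.2]) hx₀.1.le
      have hne : x₀ ≠ 0 := hx₀.1.ne'
      have hcomb := h2conv.2 hm0 hx₀I ha hb.le (by field_simp; ring)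
      have hpt : ((x₀ - x) / x₀) • (0:ℝ) + (x / x₀) • x₀ = x := by
        simp only [smul_eq_mul]
        field_simp
        ring
      rw [hpt] at hcomb
      have h1 : ((x₀ - x) / x₀) * iteratedDerivWithin 2 u (Set.Icc 0 1) 0 ≤ 0 :=
        mul_nonpos_of_nonneg_of_nonpos ha hcon
      have h2 : (x / x₀) * iteratedDerivWithin 2 u (Set.Icc 0 1) x₀ < 0 :=
        mul_neg_of_pos_of_neg hb hx₀neg
      simp only [smul_eq_mul] at hcomb
      linarith
    have hsub : Set.Icc (0:ℝ) x₀ ⊆ Set.Icc (0:ℝ) 1 := Icc_subset_Icc le_rfl hx₀.2.le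
    have hA : StrictAntiOn (iteratedDerivWithin 1 u (Set.Icc 0 1)) (Set.Icc 0 x₀) := by
      apply strictAntiOn_of_deriv_neg (convex_Icc 0 x₀) ((hcont 1 (by norm_num)).mono hsub)
      intro x hx
      rw [interior_Icc] at hx
      rw [hderiv 1 x ⟨hx.1, hx.2.trans hx₀.2⟩]
      exact hneg x hx
    have huanti : StrictAntiOn u (Set.Icc 0 x₀) := by
      apply strictAntiOn_of_deriv_neg (convex_Icc 0 x₀) (hC.continuousOn.mono hsub)
      intro x hx
      rw [interior_Icc] at hx
      rw [hD1eq x ⟨hx.1, hx.2.trans hx₀.2⟩]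
      calc iteratedDerivWithin 1 u (Set.Icc 0 1) x
          < iteratedDerivWithin 1 u (Set.Icc 0 1) 0 :=
            hA ⟨le_rfl, hx₀.1.le⟩ ⟨hx.1.le, hx.2.le⟩ hx.1
        _ = 0 := hD10
    have : u x₀ < 0 := by
      have := huanti ⟨le_rfl, hx₀.1.le⟩ ⟨hx₀.1.le, le_rfl⟩ hx₀.1
      rwa [hu0] at this
    exact absurd (hnn x₀ hx₀) (not_le.mpr this)
  · -- u''(1) > 0
    by_contra hcon
    push_neg at hcon
    have hden : (0:ℝ) < 1 - x₀ := by linarith [hx₀.2]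
    -- u'' < 0 on [x₀, 1)
    have hneg : ∀ x ∈ Set.Ioo x₀ (1:ℝ), iteratedDerivWithin 2 u (Set.Icc 0 1) x < 0 := by
      intro x hx
      have ha : 0 < (1 - x) / (1 - x₀) := div_pos (by linarith [hx.2]) hden
      have hb : 0 ≤ (x - x₀) / (1 - x₀) := div_nonneg (by linarith [hx.1]) hden.le
      have hne : (1:ℝ) - x₀ ≠ 0 := hden.ne'
      have hcomb := h2conv.2 hx₀I hm1 ha.le hb (by field_simp; ring)
      have hpt : ((1 - x) / (1 - x₀)) • x₀ + ((x - x₀) / (1 - x₀)) • (1:ℝ) = x := by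
        simp only [smul_eq_mul]
        field_simp
        ring
      rw [hpt] at hcomb
      have h1 : ((1 - x) / (1 - x₀)) * iteratedDerivWithin 2 u (Set.Icc 0 1) x₀ < 0 :=
        mul_neg_of_pos_of_neg ha hx₀neg
      have h2 : ((x - x₀) / (1 - x₀)) * iteratedDerivWithin 2 u (Set.Icc 0 1) 1 ≤ 0 :=
        mul_nonpos_of_nonneg_of_nonpos hb hcon
      simp only [smul_eq_mul] at hcomb
      linarith
    have hsub : Set.Icc x₀ (1:ℝ) ⊆ Set.Icc (0:ℝ) 1 := Icc_subset_Icc hx₀.1.le le_rfl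
    have hA : StrictAntiOn (iteratedDerivWithin 1 u (Set.Icc 0 1)) (Set.Icc x₀ 1) := by
      apply strictAntiOn_of_deriv_neg (convex_Icc x₀ 1) ((hcont 1 (by norm_num)).mono hsub)
      intro x hx
      rw [interior_Icc] at hx
      rw [hderiv 1 x ⟨hx₀.1.trans hx.1, hx.2⟩]
      exact hneg x hx
    have humono : StrictMonoOn u (Set.Icc x₀ 1) := by
      apply strictMonoOn_of_deriv_pos (convex_Icc x₀ 1) (hC.continuousOn.mono hsub)
      intro x hx
      rw [interior_Icc] at hx
      rw [hD1eq x ⟨hx₀.1.trans hx.1, hx.2⟩]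
      calc (0:ℝ) = iteratedDerivWithin 1 u (Set.Icc 0 1) 1 := hD11.symm
        _ < iteratedDerivWithin 1 u (Set.Icc 0 1) x :=
            hA ⟨hx.1.le, hx.2.le⟩ ⟨hx₀.2.le, le_rfl⟩ hx.2
    have : u x₀ < 0 := by
      have := humono ⟨le_rfl, hx₀.2.le⟩ ⟨hx₀.2.le, le_rfl⟩ hx₀.2
      rwa [hu1] at this
    exact absurd (hnn x₀ hx₀) (not_le.mpr this)
end

section
/- Let λ > 0 and let u be a positive solution of (P_λ) with u(x) < r on [0,1]. Then u is symmetric with respect to x = 1/2, i.e., u(x) = u(1−x) for all x ∈ [0,1], and u'(x) > 0 for all x ∈ (0,1/2); in particular u attains its maximum exactly at x = 1/2. -/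
open Set Filter Topology


/-- If `p a = 0` and `p' = p1 > 0` on the interior, then `p > 0` on `(a,b]`. -/
lemma pos_of_deriv_pos {p p1 : ℝ → ℝ} {a b : ℝ} (hab : a < b)
    (hc : ContinuousOn p (Icc a b))
    (hder : ∀ x ∈ Ioo a b, HasDerivAt p (p1 x) x)
    (hpos : ∀ x ∈ Ioo a b, 0 < p1 x) (h0 : p a = 0) :
    ∀ x ∈ Ioc a b, 0 < p x := by
  have hm : StrictMonoOn p (Icc a b) := by
    apply strictMonoOn_of_deriv_pos (convex_Icc a b) hc
    intro x hx
    rw [interior_Icc] at hx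
    rw [(hder x hx).deriv]
    exact hpos x hx
  intro x hx
  have := hm (left_mem_Icc.2 hab.le) ⟨hx.1.le, hx.2⟩ hx.1
  rwa [h0] at this

/-- Two functions continuous on `Icc 0 1` agreeing on `Ioo 0 1` agree on `Icc 0 1`. -/
lemma eqOn_Icc_of_eqOn_Ioo {g h : ℝ → ℝ} (hg : ContinuousOn g (Icc 0 1))
    (hh : ContinuousOn h (Icc 0 1)) (he : ∀ x ∈ Ioo (0:ℝ) 1, g x = h x) :
    ∀ x ∈ Icc (0:ℝ) 1, g x = h x := by
  intro x hx
  have hxc : x ∈ closure (Ioo (0:ℝ) 1) := by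
    rw [closure_Ioo one_ne_zero.symm]; exact hx
  have hne : (𝓝[Ioo (0:ℝ) 1] x).NeBot := mem_closure_iff_nhdsWithin_neBot.1 hxc
  have tg : Tendsto g (𝓝[Ioo (0:ℝ) 1] x) (𝓝 (g x)) :=
    (hg x hx).mono_left (nhdsWithin_mono _ Ioo_subset_Icc_self)
  have th : Tendsto h (𝓝[Ioo (0:ℝ) 1] x) (𝓝 (h x)) :=
    (hh x hx).mono_left (nhdsWithin_mono _ Ioo_subset_Icc_self)
  have tg' : Tendsto g (𝓝[Ioo (0:ℝ) 1] x) (𝓝 (h x)) := by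
    refine th.congr' ?_
    filter_upwards [self_mem_nhdsWithin] with y hy
    exact (he y hy).symm
  exact tendsto_nhds_unique tg tg'

/-- If `p 0 = p' 0 = 0` and `p ≥ 0` on `(0,1)`, then `p'' 0 ≥ 0`. -/
lemma second_nonneg {p p1 p2 : ℝ → ℝ}
    (hc : ContinuousOn p (Icc 0 1)) (hc1 : ContinuousOn p1 (Icc 0 1))
    (hc2 : ContinuousOn p2 (Icc 0 1))
    (hd : ∀ x ∈ Ioo (0:ℝ) 1, HasDerivAt p (p1 x) x)
    (hd1 : ∀ x ∈ Ioo (0:ℝ) 1, HasDerivAt p1 (p2 x) x)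
    (h0 : p 0 = 0) (h10 : p1 0 = 0)
    (hpos : ∀ x ∈ Ioo (0:ℝ) 1, 0 ≤ p x) : 0 ≤ p2 0 := by
  by_contra hneg
  push_neg at hneg
  have h01 : (0:ℝ) ∈ Icc (0:ℝ) 1 := ⟨le_rfl, zero_le_one⟩
  have hev : ∀ᶠ x in 𝓝[Icc (0:ℝ) 1] 0, p2 x < 0 :=
    (hc2 0 h01).eventually_lt (tendsto_const_nhds) hneg
  rw [nhdsWithin_Icc_eq_nhdsGE one_pos] at hev
  rw [eventually_iff, mem_nhdsGE_iff_exists_Icc_subset] at hev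
  obtain ⟨d, hd0, hsub⟩ := hev
  set δ : ℝ := min d (1/2) with hδdef
  have hδ0 : 0 < δ := lt_min hd0 (by norm_num)
  have hδ1 : δ < 1 := lt_of_le_of_lt (min_le_right _ _) (by norm_num)
  have hIccδ : Icc (0:ℝ) δ ⊆ Icc 0 1 := Icc_subset_Icc le_rfl hδ1.le
  have hIooδ : Ioo (0:ℝ) δ ⊆ Ioo 0 1 := Ioo_subset_Ioo le_rfl hδ1.le
  have hp2neg : ∀ x ∈ Icc (0:ℝ) δ, p2 x < 0 := by
    intro x hx
    exact hsub ⟨hx.1, hx.2.trans (min_le_left _ _)⟩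
  -- -p1 > 0 on (0, δ]
  have h1 : ∀ x ∈ Ioc (0:ℝ) δ, 0 < -p1 x := by
    refine pos_of_deriv_pos hδ0 (hc1.mono hIccδ).neg
      (fun x hx => (hd1 x (hIooδ hx)).neg) ?_ (by simp [h10])
    intro x hx
    have := hp2neg x ⟨hx.1.le, hx.2.le⟩
    linarith
  -- -p > 0 on (0, δ]
  have h2 : ∀ x ∈ Ioc (0:ℝ) δ, 0 < -p x := by
    refine pos_of_deriv_pos hδ0 (hc.mono hIccδ).neg
      (fun x hx => (hd x (hIooδ hx)).neg) ?_ (by simp [h0])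
    intro x hx
    have := h1 x ⟨hx.1, hx.2.le⟩
    linarith
  have := h2 δ ⟨hδ0, le_rfl⟩
  have := hpos δ ⟨hδ0, hδ1⟩
  linarith

/-- Key comparison lemma: if `w(0)=w'(0)=w''(0)=0 < w'''(0)` and `w'''' ≥ 0` wherever
`w ≥ 0`, then `w(1) = 0` is impossible. -/
lemma key_pos {w w1 w2 w3 q : ℝ → ℝ}
    (hw : ContinuousOn w (Icc 0 1)) (hw1 : ContinuousOn w1 (Icc 0 1))
    (hw2 : ContinuousOn w2 (Icc 0 1)) (hw3 : ContinuousOn w3 (Icc 0 1))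
    (hd : ∀ x ∈ Ioo (0:ℝ) 1, HasDerivAt w (w1 x) x)
    (hd1 : ∀ x ∈ Ioo (0:ℝ) 1, HasDerivAt w1 (w2 x) x)
    (hd2 : ∀ x ∈ Ioo (0:ℝ) 1, HasDerivAt w2 (w3 x) x)
    (hd3 : ∀ x ∈ Ioo (0:ℝ) 1, HasDerivAt w3 (q x) x)
    (hq : ∀ x ∈ Ioo (0:ℝ) 1, 0 ≤ w x → 0 ≤ q x)
    (h0 : w 0 = 0) (h10 : w1 0 = 0) (h20 : w2 0 = 0) (h30 : 0 < w3 0)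
    (h1 : w 1 = 0) : False := by
  have h01 : (0:ℝ) ∈ Icc (0:ℝ) 1 := ⟨le_rfl, zero_le_one⟩
  -- chain lemma: if w ≥ 0 on [0,t], then w > 0 on (0,t]
  have main : ∀ t, t ∈ Ioc (0:ℝ) 1 → (∀ x ∈ Icc 0 t, 0 ≤ w x) →
      ∀ x ∈ Ioc (0:ℝ) t, 0 < w x := by
    intro t ht hP
    have hIcct : Icc (0:ℝ) t ⊆ Icc 0 1 := Icc_subset_Icc le_rfl ht.2
    have hIoot : Ioo (0:ℝ) t ⊆ Ioo 0 1 := Ioo_subset_Ioo le_rfl ht.2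
    have hmono3 : MonotoneOn w3 (Icc 0 t) := by
      apply monotoneOn_of_deriv_nonneg (convex_Icc 0 t) (hw3.mono hIcct)
      · intro x hx
        rw [interior_Icc] at hx
        exact (hd3 x (hIoot hx)).differentiableAt.differentiableWithinAt
      · intro x hx
        rw [interior_Icc] at hx
        rw [(hd3 x (hIoot hx)).deriv]
        exact hq x (hIoot hx) (hP x ⟨hx.1.le, hx.2.le⟩)
    have hw3pos : ∀ x ∈ Icc (0:ℝ) t, 0 < w3 x := by
      intro x hx
      have := hmono3 (left_mem_Icc.2 ht.1.le) hx hx.1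
      linarith
    have hw2pos : ∀ x ∈ Ioc (0:ℝ) t, 0 < w2 x :=
      pos_of_deriv_pos ht.1 (hw2.mono hIcct) (fun x hx => hd2 x (hIoot hx))
        (fun x hx => hw3pos x ⟨hx.1.le, hx.2.le⟩) h20
    have hw1pos : ∀ x ∈ Ioc (0:ℝ) t, 0 < w1 x :=
      pos_of_deriv_pos ht.1 (hw1.mono hIcct) (fun x hx => hd1 x (hIoot hx))
        (fun x hx => hw2pos x ⟨hx.1, hx.2.le⟩) h10
    exact pos_of_deriv_pos ht.1 (hw.mono hIcct) (fun x hx => hd x (hIoot hx))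
        (fun x hx => hw1pos x ⟨hx.1, hx.2.le⟩) h0
  -- initial interval where w3 > 0
  have hev : ∀ᶠ x in 𝓝[Icc (0:ℝ) 1] 0, 0 < w3 x :=
    tendsto_const_nhds.eventually_lt (hw3 0 h01) h30
  rw [nhdsWithin_Icc_eq_nhdsGE one_pos, eventually_iff,
    mem_nhdsGE_iff_exists_Icc_subset] at hev
  obtain ⟨d, hd0, hsub⟩ := hev
  set η : ℝ := min d (1/2) with hηdef
  have hη0 : 0 < η := lt_min hd0 (by norm_num)
  have hη1 : η < 1 := lt_of_le_of_lt (min_le_right _ _) (by norm_num)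
  have hw3η : ∀ x ∈ Icc (0:ℝ) η, 0 < w3 x := fun x hx =>
    hsub ⟨hx.1, hx.2.trans (min_le_left _ _)⟩
  have hIccη : Icc (0:ℝ) η ⊆ Icc 0 1 := Icc_subset_Icc le_rfl hη1.le
  have hIooη : Ioo (0:ℝ) η ⊆ Ioo 0 1 := Ioo_subset_Ioo le_rfl hη1.le
  have hw2η : ∀ x ∈ Ioc (0:ℝ) η, 0 < w2 x :=
    pos_of_deriv_pos hη0 (hw2.mono hIccη) (fun x hx => hd2 x (hIooη hx))
      (fun x hx => hw3η x ⟨hx.1.le, hx.2.le⟩) h20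
  have hw1η : ∀ x ∈ Ioc (0:ℝ) η, 0 < w1 x :=
    pos_of_deriv_pos hη0 (hw1.mono hIccη) (fun x hx => hd1 x (hIooη hx))
      (fun x hx => hw2η x ⟨hx.1, hx.2.le⟩) h10
  have hwη : ∀ x ∈ Ioc (0:ℝ) η, 0 < w x :=
    pos_of_deriv_pos hη0 (hw.mono hIccη) (fun x hx => hd x (hIooη hx))
      (fun x hx => hw1η x ⟨hx.1, hx.2.le⟩) h0
  -- the set of good times
  set s : Set ℝ := {t | t ∈ Icc (0:ℝ) 1 ∧ ∀ x ∈ Icc 0 t, 0 ≤ w x} with hsdef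
  have hηs : η ∈ s := by
    refine ⟨⟨hη0.le, hη1.le⟩, ?_⟩
    intro x hx
    rcases eq_or_lt_of_le hx.1 with h | h
    · rw [← h, h0]
    · exact (hwη x ⟨h, hx.2⟩).le
  have hbdd : BddAbove s := ⟨1, fun t ht => ht.1.2⟩
  have hsne : s.Nonempty := ⟨η, hηs⟩
  set T : ℝ := sSup s with hTdef
  have hTη : η ≤ T := le_csSup hbdd hηs
  have hT1 : T ≤ 1 := csSup_le hsne fun t ht => ht.1.2
  have hT0 : 0 < T := lt_of_lt_of_le hη0 hTη
  have hTmem : T ∈ Icc (0:ℝ) 1 := ⟨hT0.le, hT1⟩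
  -- w ≥ 0 on [0, T]
  have hPT : ∀ x ∈ Icc (0:ℝ) T, 0 ≤ w x := by
    intro x hx
    rcases eq_or_lt_of_le hx.2 with h | h
    · -- x = T : limit argument
      rw [h]
      have hclos : T ∈ closure (Ico (0:ℝ) T) := by
        rw [closure_Ico (ne_of_lt hT0)]
        exact ⟨hT0.le, le_rfl⟩
      have hne : (𝓝[Ico (0:ℝ) T] T).NeBot := mem_closure_iff_nhdsWithin_neBot.1 hclos
      have ht : Tendsto w (𝓝[Ico (0:ℝ) T] T) (𝓝 (w T)) :=
        (hw T hTmem).mono_left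
          (nhdsWithin_mono _ (fun y hy => ⟨hy.1, hy.2.le.trans hT1⟩))
      refine ge_of_tendsto ht ?_
      filter_upwards [self_mem_nhdsWithin] with y hy
      rcases eq_or_lt_of_le hy.1 with h' | h'
      · rw [← h', h0]
      · obtain ⟨t', ht's, hyt'⟩ := exists_lt_of_lt_csSup hsne hy.2
        exact ht's.2 y ⟨hy.1, hyt'.le⟩
    · obtain ⟨t', ht's, hyt'⟩ := exists_lt_of_lt_csSup hsne h
      exact ht's.2 x ⟨hx.1, hyt'.le⟩
  -- T must be 1
  rcases eq_or_lt_of_le hT1 with hTeq | hTlt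
  · have := main T ⟨hT0, hT1⟩ hPT 1 ⟨one_pos, hTeq.ge⟩
    rw [h1] at this; exact lt_irrefl 0 this
  · -- extend beyond T, contradiction with sup
    have hwT : 0 < w T := main T ⟨hT0, hT1⟩ hPT T ⟨hT0, le_rfl⟩
    have hev2 : ∀ᶠ x in 𝓝[Icc (0:ℝ) 1] T, 0 < w x :=
      tendsto_const_nhds.eventually_lt (hw T hTmem) hwT
    rw [eventually_iff, Metric.mem_nhdsWithin_iff] at hev2
    obtain ⟨ε, hε0, hεsub⟩ := hev2
    set T' : ℝ := min (T + ε / 2) 1 with hT'def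
    have hTT' : T < T' := lt_min (by linarith) hTlt
    have hT'1 : T' ≤ 1 := min_le_right _ _
    have hT's : T' ∈ s := by
      refine ⟨⟨hT0.le.trans hTT'.le, hT'1⟩, ?_⟩
      intro x hx
      rcases le_or_gt x T with h | h
      · exact hPT x ⟨hx.1, h⟩
      · refine le_of_lt (hεsub ⟨?_, ⟨hx.1, hx.2.trans hT'1⟩⟩)
        rw [Metric.mem_ball, Real.dist_eq, abs_of_pos (by linarith)]
        have : x ≤ T + ε / 2 := hx.2.trans (min_le_left _ _)
        linarith
    have := le_csSup hbdd hT's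
    linarith


/-- Grönwall-type uniqueness: a solution of a 4th-order linear-bounded ODE vanishing to
fourth order at `0` vanishes identically on `[0,1]`. -/
lemma gronwall_zero {w w1 w2 w3 q : ℝ → ℝ} {K : ℝ}
    (hw : ContinuousOn w (Icc 0 1)) (hw1 : ContinuousOn w1 (Icc 0 1))
    (hw2 : ContinuousOn w2 (Icc 0 1)) (hw3 : ContinuousOn w3 (Icc 0 1))
    (hd : ∀ x ∈ Icc (0:ℝ) 1, HasDerivWithinAt w (w1 x) (Icc 0 1) x)
    (hd1 : ∀ x ∈ Icc (0:ℝ) 1, HasDerivWithinAt w1 (w2 x) (Icc 0 1) x)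
    (hd2 : ∀ x ∈ Icc (0:ℝ) 1, HasDerivWithinAt w2 (w3 x) (Icc 0 1) x)
    (hd3 : ∀ x ∈ Icc (0:ℝ) 1, HasDerivWithinAt w3 (q x) (Icc 0 1) x)
    (hq : ∀ x ∈ Icc (0:ℝ) 1, |q x| ≤ K * |w x|)
    (h0 : w 0 = 0) (h10 : w1 0 = 0) (h20 : w2 0 = 0) (h30 : w3 0 = 0) :
    ∀ x ∈ Icc (0:ℝ) 1, w x = 0 := by
  set K' : ℝ := max 1 K with hK'def
  have hK'1 : (1:ℝ) ≤ K' := le_max_left _ _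
  have hK'K : K ≤ K' := le_max_right _ _
  have hK'0 : (0:ℝ) ≤ K' := zero_le_one.trans hK'1
  set W : ℝ → ℝ × ℝ × ℝ × ℝ := fun x => (w x, w1 x, w2 x, w3 x) with hWdef
  set W' : ℝ → ℝ × ℝ × ℝ × ℝ := fun x => (w1 x, w2 x, w3 x, q x) with hW'def
  have hWc : ContinuousOn W (Icc 0 1) := hw.prodMk (hw1.prodMk (hw2.prodMk hw3))
  have hWd : ∀ x ∈ Ico (0:ℝ) 1, HasDerivWithinAt W (W' x) (Ici x) x := by
    intro x hx
    have hmem : Icc (0:ℝ) 1 ∈ 𝓝[Ici x] x := Icc_mem_nhdsGE_of_mem ⟨hx.1, hx.2⟩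
    have hxI : x ∈ Icc (0:ℝ) 1 := ⟨hx.1, hx.2.le⟩
    exact ((hd x hxI).mono_of_mem_nhdsWithin hmem).prodMk
      (((hd1 x hxI).mono_of_mem_nhdsWithin hmem).prodMk
        (((hd2 x hxI).mono_of_mem_nhdsWithin hmem).prodMk
          ((hd3 x hxI).mono_of_mem_nhdsWithin hmem)))
  have hW0 : ‖W 0‖ ≤ 0 := by
    simp [hWdef, h0, h10, h20, h30, Prod.norm_def]
  have hbound : ∀ x ∈ Ico (0:ℝ) 1, ‖W' x‖ ≤ K' * ‖W x‖ + 0 := by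
    intro x hx
    rw [add_zero]
    have h1 : |w x| ≤ ‖W x‖ := by
      simp only [hWdef, Prod.norm_def, Real.norm_eq_abs]
      exact le_max_left _ _
    have h2 : |w1 x| ≤ ‖W x‖ := by
      simp only [hWdef, Prod.norm_def, Real.norm_eq_abs]
      exact le_trans (le_max_left _ _) (le_max_right _ _)
    have h3 : |w2 x| ≤ ‖W x‖ := by
      simp only [hWdef, Prod.norm_def, Real.norm_eq_abs]
      exact le_trans (le_trans (le_max_left _ _) (le_max_right _ _)) (le_max_right _ _)
    have h4 : |w3 x| ≤ ‖W x‖ := by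
      simp only [hWdef, Prod.norm_def, Real.norm_eq_abs]
      exact le_trans (le_trans (le_max_right _ _) (le_max_right _ _)) (le_max_right _ _)
    have hnn : 0 ≤ ‖W x‖ := norm_nonneg _
    have hqb : |q x| ≤ K' * ‖W x‖ := by
      calc |q x| ≤ K * |w x| := hq x ⟨hx.1, hx.2.le⟩
        _ ≤ K' * |w x| := mul_le_mul_of_nonneg_right hK'K (abs_nonneg _)
        _ ≤ K' * ‖W x‖ := mul_le_mul_of_nonneg_left h1 hK'0
    have hK'W : ‖W x‖ ≤ K' * ‖W x‖ := le_mul_of_one_le_left hnn hK'1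
    simp only [hW'def, Prod.norm_def, Real.norm_eq_abs]
    refine max_le (h2.trans hK'W) (max_le (h3.trans hK'W) (max_le (h4.trans hK'W) hqb))
  have hfin := norm_le_gronwallBound_of_norm_deriv_right_le hWc hWd hW0 hbound
  intro x hx
  have := hfin x hx
  rw [gronwallBound_ε0, zero_mul] at this
  have h1 : |w x| ≤ ‖W x‖ := by
    simp only [hWdef, Prod.norm_def, Real.norm_eq_abs]
    exact le_max_left _ _
  have := h1.trans this
  exact abs_eq_zero.1 (le_antisymm this (abs_nonneg _))


/-- Any positive solution is symmetric about `x = 1/2`, strictly increasing on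
`(0, 1/2)`, and attains its maximum exactly at `x = 1/2`. -/
theorem solutions_symmetric
    (f : ℝ → ℝ) (r : ℝ) (hr : 0 < r)
    (hf : ContDiffOn ℝ 1 f (Set.Ico 0 r))
    (hfpos : ∀ s ∈ Set.Ico (0:ℝ) r, 0 < f s)
    (hf' : ∀ s ∈ Set.Ioo (0:ℝ) r, 0 < derivWithin f (Set.Ico 0 r) s)
    (lam : ℝ) (hlam : 0 < lam)
    (u : ℝ → ℝ) (hu : IsPosSol f r lam u) :
    (∀ x ∈ Set.Icc (0:ℝ) 1, u x = u (1 - x)) ∧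
    (∀ x ∈ Set.Ioo (0:ℝ) (1 / 2), 0 < derivWithin u (Set.Icc 0 1) x) ∧
    (∀ x ∈ Set.Icc (0:ℝ) 1, x ≠ 1 / 2 → u x < u (1 / 2)) := by
  obtain ⟨hC4, hur, hode, hbc0, hbc1, hdbc0, hdbc1, hnn, x₀, hx₀I, hx₀ne⟩ := hu
  have hUD : UniqueDiffOn ℝ (Icc (0:ℝ) 1) := uniqueDiffOn_Icc one_pos
  set u1 := iteratedDerivWithin 1 u (Icc 0 1) with hu1def
  set u2 := iteratedDerivWithin 2 u (Icc 0 1) with hu2def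
  set u3 := iteratedDerivWithin 3 u (Icc 0 1) with hu3def
  set u4 := iteratedDerivWithin 4 u (Icc 0 1) with hu4def
  -- continuity
  have hcu : ContinuousOn u (Icc 0 1) := hC4.continuousOn
  have hcu1 : ContinuousOn u1 (Icc 0 1) :=
    hC4.continuousOn_iteratedDerivWithin (by norm_num) hUD
  have hcu2 : ContinuousOn u2 (Icc 0 1) :=
    hC4.continuousOn_iteratedDerivWithin (by norm_num) hUD
  have hcu3 : ContinuousOn u3 (Icc 0 1) :=
    hC4.continuousOn_iteratedDerivWithin (by norm_num) hUD
  have hcu4 : ContinuousOn u4 (Icc 0 1) :=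
    hC4.continuousOn_iteratedDerivWithin (by norm_num) hUD
  -- derivative chain (within)
  have hchain : ∀ k : ℕ, (k : WithTop ℕ∞) < 4 → ∀ x ∈ Icc (0:ℝ) 1,
      HasDerivWithinAt (iteratedDerivWithin k u (Icc 0 1))
        (iteratedDerivWithin (k+1) u (Icc 0 1) x) (Icc 0 1) x := by
    intro k hk x hx
    have h := ((hC4.differentiableOn_iteratedDerivWithin hk hUD) x hx).hasDerivWithinAt
    rwa [← iteratedDerivWithin_succ] at h
  have hcd0 : ∀ x ∈ Icc (0:ℝ) 1, HasDerivWithinAt u (u1 x) (Icc 0 1) x := by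
    intro x hx
    have := hchain 0 (by norm_num) x hx
    rwa [iteratedDerivWithin_zero] at this
  have hcd1 : ∀ x ∈ Icc (0:ℝ) 1, HasDerivWithinAt u1 (u2 x) (Icc 0 1) x :=
    fun x hx => hchain 1 (by norm_num) x hx
  have hcd2 : ∀ x ∈ Icc (0:ℝ) 1, HasDerivWithinAt u2 (u3 x) (Icc 0 1) x :=
    fun x hx => hchain 2 (by norm_num) x hx
  have hcd3 : ∀ x ∈ Icc (0:ℝ) 1, HasDerivWithinAt u3 (u4 x) (Icc 0 1) x :=
    fun x hx => hchain 3 (by norm_num) x hx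
  -- derivative chain (at, in the interior)
  have had0 : ∀ x ∈ Ioo (0:ℝ) 1, HasDerivAt u (u1 x) x :=
    fun x hx => (hcd0 x (Ioo_subset_Icc_self hx)).hasDerivAt (Icc_mem_nhds hx.1 hx.2)
  have had1 : ∀ x ∈ Ioo (0:ℝ) 1, HasDerivAt u1 (u2 x) x :=
    fun x hx => (hcd1 x (Ioo_subset_Icc_self hx)).hasDerivAt (Icc_mem_nhds hx.1 hx.2)
  have had2 : ∀ x ∈ Ioo (0:ℝ) 1, HasDerivAt u2 (u3 x) x :=
    fun x hx => (hcd2 x (Ioo_subset_Icc_self hx)).hasDerivAt (Icc_mem_nhds hx.1 hx.2)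
  have had3 : ∀ x ∈ Ioo (0:ℝ) 1, HasDerivAt u3 (u4 x) x :=
    fun x hx => (hcd3 x (Ioo_subset_Icc_self hx)).hasDerivAt (Icc_mem_nhds hx.1 hx.2)
  -- nonnegativity on the closed interval
  have hge : ∀ x ∈ Icc (0:ℝ) 1, 0 ≤ u x := by
    intro x hx
    rcases eq_or_lt_of_le hx.1 with h | h
    · rw [← h, hbc0]
    rcases eq_or_lt_of_le hx.2 with h2 | h2
    · rw [h2, hbc1]
    exact hnn x ⟨h, h2⟩
  have hmapu : MapsTo u (Icc (0:ℝ) 1) (Ico (0:ℝ) r) :=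
    fun x hx => ⟨hge x hx, hur x hx⟩
  -- u4 = lam * f ∘ u on all of Icc 0 1
  have hcfu : ContinuousOn (fun x => lam * f (u x)) (Icc 0 1) :=
    continuousOn_const.mul (hf.continuousOn.comp hcu hmapu)
  have hu4eq : ∀ x ∈ Icc (0:ℝ) 1, u4 x = lam * f (u x) :=
    eqOn_Icc_of_eqOn_Ioo hcu4 hcfu hode
  -- the max of u
  obtain ⟨xM, hxMI, hxMmax⟩ := isCompact_Icc.exists_isMaxOn
    (nonempty_Icc.2 zero_le_one) hcu
  set M := u xM with hMdef
  have hM1 : ∀ x ∈ Icc (0:ℝ) 1, u x ≤ M := fun x hx => hxMmax hx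
  have hMr : M < r := hur xM hxMI
  have hM0 : 0 < M :=
    lt_of_lt_of_le (lt_of_le_of_ne (hnn x₀ hx₀I) (Ne.symm hx₀ne))
      (hM1 x₀ (Ioo_subset_Icc_self hx₀I))
  have hmemM : ∀ x ∈ Icc (0:ℝ) 1, u x ∈ Icc (0:ℝ) M := fun x hx => ⟨hge x hx, hM1 x hx⟩
  have hIccIco : Icc (0:ℝ) M ⊆ Ico (0:ℝ) r := fun s hs => ⟨hs.1, lt_of_le_of_lt hs.2 hMr⟩
  -- f is strictly monotone on [0, M]
  have hfmono : StrictMonoOn f (Icc (0:ℝ) M) := by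
    apply strictMonoOn_of_deriv_pos (convex_Icc 0 M) (hf.continuousOn.mono hIccIco)
    intro x hx
    rw [interior_Icc] at hx
    have hxr : x ∈ Ioo (0:ℝ) r := ⟨hx.1, hx.2.trans hMr⟩
    have hnb : Ico (0:ℝ) r ∈ 𝓝 x :=
      mem_nhds_iff.2 ⟨Ioo 0 r, Ioo_subset_Ico_self, isOpen_Ioo, hxr⟩
    rw [← derivWithin_of_mem_nhds hnb]
    exact hf' x hxr
  -- f is Lipschitz on [0, M]
  have hfC1M : ContDiffOn ℝ 1 f (Icc (0:ℝ) M) := hf.mono hIccIco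
  have hUDM : UniqueDiffOn ℝ (Icc (0:ℝ) M) := uniqueDiffOn_Icc hM0
  have hdiffM : DifferentiableOn ℝ f (Icc (0:ℝ) M) := hfC1M.differentiableOn one_ne_zero
  have hdercont : ContinuousOn (derivWithin f (Icc (0:ℝ) M)) (Icc (0:ℝ) M) :=
    hfC1M.continuousOn_derivWithin hUDM le_rfl
  obtain ⟨xC, hxCI, hxCmax⟩ := isCompact_Icc.exists_isMaxOn
    (nonempty_Icc.2 hM0.le) hdercont.abs
  set C := |derivWithin f (Icc (0:ℝ) M) xC| with hCdef
  have hlip : ∀ a ∈ Icc (0:ℝ) M, ∀ b ∈ Icc (0:ℝ) M, |f b - f a| ≤ C * |b - a| := by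
    intro a ha b hb
    have := Convex.norm_image_sub_le_of_norm_derivWithin_le hdiffM
      (fun x hx => by rw [Real.norm_eq_abs]; exact hxCmax hx) (convex_Icc 0 M) ha hb
    simpa [Real.norm_eq_abs] using this
  -- the reflection infrastructure
  have hσd : ∀ x : ℝ, HasDerivAt (fun y : ℝ => 1 - y) (-1 : ℝ) x := by
    intro x
    simpa using (hasDerivAt_id x).const_sub 1
  have hσc : Continuous (fun y : ℝ => 1 - y) := continuous_const.sub continuous_id
  have hmapσ : MapsTo (fun y : ℝ => 1 - y) (Icc (0:ℝ) 1) (Icc (0:ℝ) 1) := by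
    intro y hy
    simp only [mem_Icc] at hy ⊢
    constructor <;> [skip; skip] <;> linarith [hy.1, hy.2]
  have hcompσ : ∀ (p p' : ℝ → ℝ),
      (∀ x ∈ Icc (0:ℝ) 1, HasDerivWithinAt p (p' x) (Icc 0 1) x) →
      ∀ x ∈ Icc (0:ℝ) 1, HasDerivWithinAt (fun y => p (1 - y)) (-(p' (1 - x))) (Icc 0 1) x := by
    intro p p' hp x hx
    have h := (hp (1-x) (hmapσ hx)).comp x ((hσd x).hasDerivWithinAt) hmapσ
    exact h.congr_deriv (by ring)
  set v : ℝ → ℝ := fun y => u (1 - y) with hvdef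
  set v1 : ℝ → ℝ := fun y => -u1 (1 - y) with hv1def
  set v2 : ℝ → ℝ := fun y => u2 (1 - y) with hv2def
  set v3 : ℝ → ℝ := fun y => -u3 (1 - y) with hv3def
  set v4 : ℝ → ℝ := fun y => u4 (1 - y) with hv4def
  have hcv : ContinuousOn v (Icc 0 1) := hcu.comp hσc.continuousOn hmapσ
  have hcv1 : ContinuousOn v1 (Icc 0 1) := (hcu1.comp hσc.continuousOn hmapσ).neg
  have hcv2 : ContinuousOn v2 (Icc 0 1) := hcu2.comp hσc.continuousOn hmapσ
  have hcv3 : ContinuousOn v3 (Icc 0 1) := (hcu3.comp hσc.continuousOn hmapσ).neg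
  have hvd0 : ∀ x ∈ Icc (0:ℝ) 1, HasDerivWithinAt v (v1 x) (Icc 0 1) x :=
    fun x hx => hcompσ u u1 hcd0 x hx
  have hvd1 : ∀ x ∈ Icc (0:ℝ) 1, HasDerivWithinAt v1 (v2 x) (Icc 0 1) x := by
    intro x hx
    have := (hcompσ u1 u2 hcd1 x hx).neg
    simp only [neg_neg] at this; exact this
  have hvd2 : ∀ x ∈ Icc (0:ℝ) 1, HasDerivWithinAt v2 (v3 x) (Icc 0 1) x :=
    fun x hx => hcompσ u2 u3 hcd2 x hx
  have hvd3 : ∀ x ∈ Icc (0:ℝ) 1, HasDerivWithinAt v3 (v4 x) (Icc 0 1) x := by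
    intro x hx
    have := (hcompσ u3 u4 hcd3 x hx).neg
    simp only [neg_neg] at this; exact this
  have hvad0 : ∀ x ∈ Ioo (0:ℝ) 1, HasDerivAt v (v1 x) x :=
    fun x hx => (hvd0 x (Ioo_subset_Icc_self hx)).hasDerivAt (Icc_mem_nhds hx.1 hx.2)
  have hvad1 : ∀ x ∈ Ioo (0:ℝ) 1, HasDerivAt v1 (v2 x) x :=
    fun x hx => (hvd1 x (Ioo_subset_Icc_self hx)).hasDerivAt (Icc_mem_nhds hx.1 hx.2)
  have hvad2 : ∀ x ∈ Ioo (0:ℝ) 1, HasDerivAt v2 (v3 x) x :=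
    fun x hx => (hvd2 x (Ioo_subset_Icc_self hx)).hasDerivAt (Icc_mem_nhds hx.1 hx.2)
  have hvad3 : ∀ x ∈ Ioo (0:ℝ) 1, HasDerivAt v3 (v4 x) x :=
    fun x hx => (hvd3 x (Ioo_subset_Icc_self hx)).hasDerivAt (Icc_mem_nhds hx.1 hx.2)
  -- boundary values of u1
  have h0I : (0:ℝ) ∈ Icc (0:ℝ) 1 := ⟨le_rfl, zero_le_one⟩
  have h1I : (1:ℝ) ∈ Icc (0:ℝ) 1 := ⟨zero_le_one, le_rfl⟩
  have hu10 : u1 0 = 0 := by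
    rw [hu1def, iteratedDerivWithin_one]
    exact hdbc0
  have hu11 : u1 1 = 0 := by
    rw [hu1def, iteratedDerivWithin_one]
    exact hdbc1
  -- the conserved quantity H
  set F : ℝ → ℝ := fun s => f (max 0 (min s M)) with hFdef
  have hclampmem : ∀ s : ℝ, max 0 (min s M) ∈ Icc (0:ℝ) M :=
    fun s => ⟨le_max_left _ _, max_le hM0.le (min_le_right _ _)⟩
  have hFc : Continuous F :=
    hf.continuousOn.comp_continuous
      (continuous_const.max (continuous_id.min continuous_const))
      (fun s => hIccIco (hclampmem s))
  have hFeq : ∀ x ∈ Icc (0:ℝ) 1, F (u x) = f (u x) := by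
    intro x hx
    have h := hmemM x hx
    rw [hFdef]
    simp only
    rw [min_eq_left h.2, max_eq_right h.1]
  set G : ℝ → ℝ := fun s => ∫ t in (0:ℝ)..s, lam * F t with hGdef
  have hGd : ∀ s : ℝ, HasDerivAt G (lam * F s) s :=
    fun s => ((continuous_const.mul hFc).integral_hasStrictDerivAt 0 s).hasDerivAt
  have hGc : Continuous G := continuous_iff_continuousAt.2 fun s => ((hGd s).differentiableAt).continuousAt
  set H : ℝ → ℝ := fun x => u3 x * u1 x - (u2 x)^2/2 - G (u x) with hHdef
  have hHd : ∀ x ∈ Ioo (0:ℝ) 1, HasDerivAt H 0 x := by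
    intro x hx
    have hxI := Ioo_subset_Icc_self hx
    have hu' := had0 x hx
    have hu1' := had1 x hx
    have hu2' := had2 x hx
    have hu3' := had3 x hx
    have h3' : HasDerivAt u3 (lam * F (u x)) x := by
      rwa [hu4eq x hxI, ← hFeq x hxI] at hu3'
    have h1 : HasDerivAt (fun y => u3 y * u1 y)
        (lam * F (u x) * u1 x + u3 x * u2 x) x := h3'.mul hu1'
    have h2 : HasDerivAt (fun y => (u2 y)^2/2) (u2 x * u3 x) x := by
      have := (hu2'.pow 2).div_const 2
      exact this.congr_deriv (by push_cast; ring)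
    have h3 : HasDerivAt (fun y => G (u y)) (lam * F (u x) * u1 x) x :=
      (hGd (u x)).comp x hu'
    have h := (h1.sub h2).sub h3
    exact h.congr_deriv (by ring)
  have hHc : ContinuousOn H (Icc (0:ℝ) 1) :=
    ((hcu3.mul hcu1).sub ((hcu2.pow 2).div_const 2)).sub (hGc.comp_continuousOn hcu)
  have hHmono : MonotoneOn H (Icc (0:ℝ) 1) := by
    apply monotoneOn_of_deriv_nonneg (convex_Icc 0 1) hHc
    · intro x hx
      rw [interior_Icc] at hx
      exact (hHd x hx).differentiableAt.differentiableWithinAt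
    · intro x hx
      rw [interior_Icc] at hx
      rw [(hHd x hx).deriv]
  have hHanti : AntitoneOn H (Icc (0:ℝ) 1) := by
    apply antitoneOn_of_deriv_nonpos (convex_Icc 0 1) hHc
    · intro x hx
      rw [interior_Icc] at hx
      exact (hHd x hx).differentiableAt.differentiableWithinAt
    · intro x hx
      rw [interior_Icc] at hx
      rw [(hHd x hx).deriv]
  have hH01 : H 0 = H 1 :=
    le_antisymm (hHmono h0I h1I zero_le_one) (hHanti h0I h1I zero_le_one)
  have hsq : (u2 0)^2 = (u2 1)^2 := by
    have h := hH01
    simp only [hHdef, hu10, hu11, hbc0, hbc1, mul_zero] at h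
    linarith
  -- sign of u2 at the endpoints
  have hu20 : 0 ≤ u2 0 := second_nonneg hcu hcu1 hcu2 had0 had1 hbc0 hu10 hnn
  have hv20 : 0 ≤ v2 0 := by
    apply second_nonneg hcv hcv1 hcv2 hvad0 hvad1
    · show u (1 - 0) = 0
      norm_num [hbc1]
    · show -u1 (1 - 0) = 0
      norm_num [hu11]
    · intro x hx
      exact hge (1-x) (hmapσ (Ioo_subset_Icc_self hx))
  have hu21 : 0 ≤ u2 1 := by
    have : v2 0 = u2 1 := by rw [hv2def]; norm_num
    linarith
  have hu2eq : u2 0 = u2 1 := by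
    have hfac : (u2 0 - u2 1) * (u2 0 + u2 1) = 0 := by linear_combination hsq
    rcases mul_eq_zero.1 hfac with h | h
    · linarith
    · linarith
  -- the difference w = u - v and its derivatives
  set w : ℝ → ℝ := fun x => u x - v x with hwdef
  set w1 : ℝ → ℝ := fun x => u1 x - v1 x with hw1def
  set w2 : ℝ → ℝ := fun x => u2 x - v2 x with hw2def
  set w3 : ℝ → ℝ := fun x => u3 x - v3 x with hw3def
  set qq : ℝ → ℝ := fun x => lam * f (u x) - lam * f (v x) with hqqdef
  have hcw : ContinuousOn w (Icc 0 1) := hcu.sub hcv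
  have hcw1 : ContinuousOn w1 (Icc 0 1) := hcu1.sub hcv1
  have hcw2 : ContinuousOn w2 (Icc 0 1) := hcu2.sub hcv2
  have hcw3 : ContinuousOn w3 (Icc 0 1) := hcu3.sub hcv3
  have hwd0 : ∀ x ∈ Icc (0:ℝ) 1, HasDerivWithinAt w (w1 x) (Icc 0 1) x :=
    fun x hx => (hcd0 x hx).sub (hvd0 x hx)
  have hwd1 : ∀ x ∈ Icc (0:ℝ) 1, HasDerivWithinAt w1 (w2 x) (Icc 0 1) x :=
    fun x hx => (hcd1 x hx).sub (hvd1 x hx)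
  have hwd2 : ∀ x ∈ Icc (0:ℝ) 1, HasDerivWithinAt w2 (w3 x) (Icc 0 1) x :=
    fun x hx => (hcd2 x hx).sub (hvd2 x hx)
  have hv4eq : ∀ x ∈ Icc (0:ℝ) 1, v4 x = lam * f (v x) := by
    intro x hx
    rw [hv4def]
    exact hu4eq (1-x) (hmapσ hx)
  have hwd3 : ∀ x ∈ Icc (0:ℝ) 1, HasDerivWithinAt w3 (qq x) (Icc 0 1) x := by
    intro x hx
    have h := (hcd3 x hx).sub (hvd3 x hx)
    rwa [hu4eq x hx, hv4eq x hx] at h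
  have hwad0 : ∀ x ∈ Ioo (0:ℝ) 1, HasDerivAt w (w1 x) x :=
    fun x hx => (hwd0 x (Ioo_subset_Icc_self hx)).hasDerivAt (Icc_mem_nhds hx.1 hx.2)
  have hwad1 : ∀ x ∈ Ioo (0:ℝ) 1, HasDerivAt w1 (w2 x) x :=
    fun x hx => (hwd1 x (Ioo_subset_Icc_self hx)).hasDerivAt (Icc_mem_nhds hx.1 hx.2)
  have hwad2 : ∀ x ∈ Ioo (0:ℝ) 1, HasDerivAt w2 (w3 x) x :=
    fun x hx => (hwd2 x (Ioo_subset_Icc_self hx)).hasDerivAt (Icc_mem_nhds hx.1 hx.2)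
  have hwad3 : ∀ x ∈ Ioo (0:ℝ) 1, HasDerivAt w3 (qq x) x :=
    fun x hx => (hwd3 x (Ioo_subset_Icc_self hx)).hasDerivAt (Icc_mem_nhds hx.1 hx.2)
  -- boundary values of w
  have hw00 : w 0 = 0 := by
    simp only [hwdef, hvdef, hbc0, sub_zero]
    norm_num [hbc1]
  have hw10 : w1 0 = 0 := by
    simp only [hw1def, hv1def]
    norm_num [hu10, hu11]
  have hw20 : w2 0 = 0 := by
    simp only [hw2def, hv2def]
    norm_num [hu2eq]
  have hw30eq : w3 0 = u3 0 + u3 1 := by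
    simp only [hw3def, hv3def]
    norm_num
  have hw01 : w 1 = 0 := by
    simp only [hwdef, hvdef]
    norm_num [hbc0, hbc1]
  -- monotonicity consequence for qq
  have hmemMv : ∀ x ∈ Icc (0:ℝ) 1, v x ∈ Icc (0:ℝ) M :=
    fun x hx => hmemM (1-x) (hmapσ hx)
  have hqmono : ∀ x ∈ Icc (0:ℝ) 1, 0 ≤ w x → 0 ≤ qq x := by
    intro x hx hwx
    have h1 : v x ≤ u x := by
      have : 0 ≤ u x - v x := hwx
      linarith
    have h2 : f (v x) ≤ f (u x) :=
      hfmono.monotoneOn (hmemMv x hx) (hmemM x hx) h1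
    have := mul_le_mul_of_nonneg_left h2 hlam.le
    simp only [hqqdef]
    linarith
  have hqmono' : ∀ x ∈ Icc (0:ℝ) 1, w x ≤ 0 → qq x ≤ 0 := by
    intro x hx hwx
    have h1 : u x ≤ v x := by
      have : u x - v x ≤ 0 := hwx
      linarith
    have h2 : f (u x) ≤ f (v x) :=
      hfmono.monotoneOn (hmemM x hx) (hmemMv x hx) h1
    have := mul_le_mul_of_nonneg_left h2 hlam.le
    simp only [hqqdef]
    linarith
  -- the third derivative sum vanishes
  have hA : u3 0 + u3 1 = 0 := by
    by_contra hA
    rcases lt_or_gt_of_ne hA with hAneg | hApos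
    · -- apply key_pos to -w
      refine key_pos hcw.neg hcw1.neg hcw2.neg hcw3.neg
        (fun x hx => (hwad0 x hx).neg) (fun x hx => (hwad1 x hx).neg)
        (fun x hx => (hwad2 x hx).neg) (fun x hx => (hwad3 x hx).neg)
        ?_ (by simp [hw00]) (by simp [hw10]) (by simp [hw20]) ?_ (by simp [hw01])
      · intro x hx hwx
        have : w x ≤ 0 := by simp only [Pi.neg_apply] at hwx; linarith [hwx]
        have := hqmono' x (Ioo_subset_Icc_self hx) this
        simpa using this
      · show (0:ℝ) < -w3 0
        rw [hw30eq]
        linarith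
    · refine key_pos hcw hcw1 hcw2 hcw3 hwad0 hwad1 hwad2 hwad3
        (fun x hx => hqmono x (Ioo_subset_Icc_self hx)) hw00 hw10 hw20 ?_ hw01
      rw [hw30eq]
      exact hApos
  have hw30 : w3 0 = 0 := by rw [hw30eq]; exact hA
  -- Gronwall: w ≡ 0
  have hqbound : ∀ x ∈ Icc (0:ℝ) 1, |qq x| ≤ (lam * C) * |w x| := by
    intro x hx
    have h := hlip (v x) (hmemMv x hx) (u x) (hmemM x hx)
    calc |qq x| = lam * |f (u x) - f (v x)| := by
          rw [hqqdef]
          simp only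
          rw [← mul_sub, abs_mul, abs_of_pos hlam]
      _ ≤ lam * (C * |u x - v x|) := mul_le_mul_of_nonneg_left h hlam.le
      _ = (lam * C) * |w x| := by rw [hwdef]; ring
  have hw0 : ∀ x ∈ Icc (0:ℝ) 1, w x = 0 :=
    gronwall_zero hcw hcw1 hcw2 hcw3 hwd0 hwd1 hwd2 hwd3 hqbound hw00 hw10 hw20 hw30
  have hsym : ∀ x ∈ Icc (0:ℝ) 1, u x = u (1 - x) := by
    intro x hx
    have := hw0 x hx
    simp only [hwdef, hvdef, sub_eq_zero] at this
    exact this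
  -- derivatives of w vanish on Icc
  have hw1z : ∀ x ∈ Icc (0:ℝ) 1, w1 x = 0 := by
    intro x hx
    have h1 : w1 x = derivWithin w (Icc 0 1) x := ((hwd0 x hx).derivWithin (hUD x hx)).symm
    rw [h1, derivWithin_congr (fun y hy => hw0 y hy) (hw0 x hx)]
    exact congrFun (derivWithin_fun_const _ _) x
  have hw2z : ∀ x ∈ Icc (0:ℝ) 1, w2 x = 0 := by
    intro x hx
    have h1 : w2 x = derivWithin w1 (Icc 0 1) x := ((hwd1 x hx).derivWithin (hUD x hx)).symm
    rw [h1, derivWithin_congr (fun y hy => hw1z y hy) (hw1z x hx)]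
    exact congrFun (derivWithin_fun_const _ _) x
  have hw3z : ∀ x ∈ Icc (0:ℝ) 1, w3 x = 0 := by
    intro x hx
    have h1 : w3 x = derivWithin w2 (Icc 0 1) x := ((hwd2 x hx).derivWithin (hUD x hx)).symm
    rw [h1, derivWithin_congr (fun y hy => hw2z y hy) (hw2z x hx)]
    exact congrFun (derivWithin_fun_const _ _) x
  have hhalfI : (1/2:ℝ) ∈ Icc (0:ℝ) 1 := ⟨by norm_num, by norm_num⟩
  have hu1half : u1 (1/2) = 0 := by
    have := hw1z (1/2) hhalfI
    simp only [hw1def, hv1def] at this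
    norm_num at this
    linarith
  have hu3half : u3 (1/2) = 0 := by
    have := hw3z (1/2) hhalfI
    simp only [hw3def, hv3def] at this
    norm_num at this
    linarith
  -- u3 is strictly monotone, negative on (0, 1/2)
  have hu3mono : StrictMonoOn u3 (Icc (0:ℝ) 1) := by
    apply strictMonoOn_of_deriv_pos (convex_Icc 0 1) hcu3
    intro x hx
    rw [interior_Icc] at hx
    rw [(had3 x hx).deriv, hu4eq x (Ioo_subset_Icc_self hx)]
    exact mul_pos hlam (hfpos _ (hmapu (Ioo_subset_Icc_self hx)))
  have hu3neg : ∀ x ∈ Ioo (0:ℝ) (1/2:ℝ), u3 x < 0 := by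
    intro x hx
    have := hu3mono ⟨hx.1.le, by linarith [hx.2]⟩ hhalfI hx.2
    rwa [hu3half] at this
  -- u1 is strictly concave on [0, 1/2], hence positive inside
  have hIccHalf : Icc (0:ℝ) (1/2) ⊆ Icc (0:ℝ) 1 := Icc_subset_Icc le_rfl (by norm_num)
  have hconc : StrictConcaveOn ℝ (Icc (0:ℝ) (1/2)) u1 := by
    apply strictConcaveOn_of_deriv2_neg (convex_Icc _ _) (hcu1.mono hIccHalf)
    intro x hx
    rw [interior_Icc] at hx
    have hxI : x ∈ Ioo (0:ℝ) 1 := ⟨hx.1, by linarith [hx.2]⟩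
    have hev : deriv u1 =ᶠ[𝓝 x] u2 := by
      filter_upwards [Ioo_mem_nhds hxI.1 hxI.2] with y hy
      exact (had1 y hy).deriv
    have : deriv^[2] u1 x = deriv (deriv u1) x := rfl
    rw [this, hev.deriv_eq, (had2 x hxI).deriv]
    exact hu3neg x hx
  have hu1pos : ∀ x ∈ Ioo (0:ℝ) (1/2:ℝ), 0 < u1 x := by
    intro x hx
    have h05 : (0:ℝ) ∈ Icc (0:ℝ) (1/2) := ⟨le_rfl, by norm_num⟩
    have h55 : (1/2:ℝ) ∈ Icc (0:ℝ) (1/2) := ⟨by norm_num, le_rfl⟩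
    have hcomb := hconc.2 h05 h55 (by norm_num)
      (show (0:ℝ) < 1 - 2*x by linarith [hx.2]) (show (0:ℝ) < 2*x by linarith [hx.1])
      (by ring)
    rw [hu10, hu1half] at hcomb
    have harg : (1 - 2*x) • (0:ℝ) + (2*x) • (1/2:ℝ) = x := by
      simp only [smul_eq_mul]
      ring
    rw [harg] at hcomb
    simpa using hcomb
  -- u is strictly monotone on [0, 1/2]
  have humono : StrictMonoOn u (Icc (0:ℝ) (1/2)) := by
    apply strictMonoOn_of_deriv_pos (convex_Icc _ _) (hcu.mono hIccHalf)
    intro x hx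
    rw [interior_Icc] at hx
    rw [(had0 x ⟨hx.1, by linarith [hx.2]⟩).deriv]
    exact hu1pos x hx
  refine ⟨hsym, ?_, ?_⟩
  · intro x hx
    have hxI : x ∈ Icc (0:ℝ) 1 := ⟨hx.1.le, by linarith [hx.2]⟩
    rw [show derivWithin u (Set.Icc 0 1) x = u1 x from
      (congrFun iteratedDerivWithin_one x).symm]
    exact hu1pos x hx
  · intro x hx hne
    rcases lt_or_gt_of_ne hne with h | h
    · exact humono ⟨hx.1, h.le⟩ ⟨by norm_num, le_rfl⟩ h
    · rw [hsym x hx]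
      have hx1 : 1 - x ∈ Icc (0:ℝ) (1/2) := ⟨by linarith [hx.2], by linarith⟩
      exact humono hx1 ⟨by norm_num, le_rfl⟩ (by linarith)
end
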